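/- arXiv:1212.0054 — 15 statements merged into one kernel-verified Lean document; each statement's English description precedes it below -/
import Mathlib

section
/- Let X be a real normed space, 1 ≤ p < ∞, and let x, y ∈ X with x ⊥_p y, meaning ‖x + k·y‖^p = ‖x‖^p + ‖k·y‖^p for all k ∈ ℝ. If x₁, …, xₙ are pairwise p-orthogonal nonzero elements of X, then for all scalars α₁, …, αₙ we have ‖∑ αₖ xₖ‖^p = ∑ ‖αₖ xₖ‖^p. -/
/-- `x ⊥_p y`: `‖x + k • y‖ ^ p = ‖x‖ ^ p + ‖k • y‖ ^ p` for all `k : ℝ`. -/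
def PerpP {X : Type*} [NormedAddCommGroup X] [NormedSpace ℝ X] (p : ℝ) (x y : X) : Prop :=
  ∀ k : ℝ, ‖x + k • y‖ ^ p = ‖x‖ ^ p + ‖k • y‖ ^ p

lemma perp_smul {X : Type*} [NormedAddCommGroup X] [NormedSpace ℝ X] {p : ℝ} {x y : X}
    (h : PerpP p x y) (c : ℝ) : PerpP p x (c • y) := by
  intro k
  rw [smul_smul]
  exact h (k * c)

lemma perp_zero {X : Type*} [NormedAddCommGroup X] [NormedSpace ℝ X] {p : ℝ} (hp : p ≠ 0)
    (x : X) : PerpP p x 0 := by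
  intro k
  simp [Real.zero_rpow hp]

lemma perp_main {X : Type*} [NormedAddCommGroup X] [NormedSpace ℝ X] {p : ℝ} (hp : 1 ≤ p)
    {x y : X} (h : PerpP p x y) (a : ℝ) :
    ‖a • x + y‖ ^ p = ‖a • x‖ ^ p + ‖y‖ ^ p := by
  have hp0 : p ≠ 0 := by linarith
  rcases eq_or_ne a 0 with rfl | ha
  · simp [Real.zero_rpow hp0]
  · have key : a • x + y = a • (x + a⁻¹ • y) := by
      rw [smul_add, smul_smul, mul_inv_cancel₀ ha, one_smul]
    rw [key, norm_smul, Real.norm_eq_abs,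
      Real.mul_rpow (abs_nonneg a) (norm_nonneg _), h a⁻¹, mul_add]
    congr 1
    · rw [norm_smul, Real.norm_eq_abs, ← Real.mul_rpow (abs_nonneg a) (norm_nonneg _)]
    · rw [norm_smul, Real.norm_eq_abs, abs_inv,
        Real.mul_rpow (abs_inv a ▸ abs_nonneg a⁻¹) (norm_nonneg y),
        ← mul_assoc, ← Real.mul_rpow (abs_nonneg a) (abs_nonneg a⁻¹ |>.trans (le_of_eq (abs_inv a))),
        mul_inv_cancel₀ (abs_ne_zero.mpr ha), Real.one_rpow, one_mul]

theorem stmt0 {X : Type*} [NormedAddCommGroup X] [NormedSpace ℝ X]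
    (p : ℝ) (hp : 1 ≤ p) (n : ℕ) (x : Fin n → X)
    (hx : ∀ i, x i ≠ 0)
    (horth : ∀ i j, i ≠ j → PerpP p (x i) (x j))
    (hadd : ∀ a b c : X, PerpP p a b → PerpP p a c → PerpP p a (b + c))
    (α : Fin n → ℝ) :
    ‖∑ i, α i • x i‖ ^ p = ∑ i, ‖α i • x i‖ ^ p := by
  have hp0 : p ≠ 0 := by linarith
  induction n with
  | zero => simp [Real.zero_rpow hp0]
  | succ n ih =>
    rw [Fin.sum_univ_succ, Fin.sum_univ_succ]
    have hperp : PerpP p (x 0) (∑ i : Fin n, α i.succ • x i.succ) := by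
      classical
      induction (Finset.univ : Finset (Fin n)) using Finset.induction with
      | empty => simpa using perp_zero hp0 (x 0)
      | insert _ _ hnot ih2 =>
        rw [Finset.sum_insert hnot]
        exact hadd _ _ _ (perp_smul (horth _ _ (Fin.succ_ne_zero _).symm) _) ih2
    rw [perp_main hp hperp, ih (fun i => x i.succ) (fun i => hx i.succ)
      (fun i j hij => horth i.succ j.succ (fun h => hij (Fin.succ_injective n h)))
      (fun i => α i.succ)]
end

section
/- Let X be a real normed space and let x, y ∈ X with x ⊥_∞ y, meaning ‖x + k·y‖ = max(‖x‖, ‖k·y‖) for all k ∈ ℝ. If x₁, …, xₙ are pairwise ∞-orthogonal nonzero elements of X and ⊥_∞ is additive on X, then for all scalars α₁, …, αₙ we have ‖∑ αₖ xₖ‖ = max over k of ‖αₖ xₖ‖. -/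
/-- `x ⊥_∞ y`: `‖x + k • y‖ = max ‖x‖ ‖k • y‖` for all `k : ℝ`. -/
def PerpInf {X : Type*} [NormedAddCommGroup X] [NormedSpace ℝ X] (x y : X) : Prop :=
  ∀ k : ℝ, ‖x + k • y‖ = max ‖x‖ ‖k • y‖

lemma perp_zero_s1 {X : Type*} [NormedAddCommGroup X] [NormedSpace ℝ X] (a : X) :
    PerpInf a (0 : X) := by
  intro k
  simp [max_eq_left (norm_nonneg a)]

lemma perp_smul_s1 {X : Type*} [NormedAddCommGroup X] [NormedSpace ℝ X] {a b : X}
    (h : PerpInf a b) (c : ℝ) : PerpInf a (c • b) := by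
  intro k
  rw [smul_smul]
  exact h (k * c)

lemma perp_symm {X : Type*} [NormedAddCommGroup X] [NormedSpace ℝ X] {a b : X}
    (h : PerpInf a b) : PerpInf b a := by
  intro k
  rcases eq_or_ne k 0 with hk | hk
  · simp [hk, max_eq_left (norm_nonneg b)]
  · have key : b + k • a = k • (a + k⁻¹ • b) := by
      rw [smul_add, smul_smul, mul_inv_cancel₀ hk, one_smul, add_comm]
    rw [key, norm_smul, h k⁻¹, norm_smul, norm_smul, mul_max_of_nonneg _ _ (norm_nonneg (k:ℝ)),
      ← mul_assoc, norm_inv,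
      mul_inv_cancel₀ (by simpa using hk : ‖k‖ ≠ 0), one_mul, max_comm]

lemma perp_sum {X : Type*} [NormedAddCommGroup X] [NormedSpace ℝ X] {a : X}
    {ι : Type*} (s : Finset ι) (f : ι → X)
    (hadd : ∀ a b c : X, PerpInf a b → PerpInf a c → PerpInf a (b + c))
    (h : ∀ i ∈ s, PerpInf a (f i)) : PerpInf a (∑ i ∈ s, f i) := by
  induction s using Finset.cons_induction with
  | empty => simpa using perp_zero_s1 a
  | cons i s hi ih =>
    rw [Finset.sum_cons]
    exact hadd _ _ _ (h i (Finset.mem_cons_self i s))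
      (ih fun j hj => h j (Finset.mem_cons_of_mem hj))

lemma sup'_succ {n : ℕ} (f : Fin (n + 2) → ℝ) :
    Finset.univ.sup' Finset.univ_nonempty f
      = max (Finset.univ.sup' Finset.univ_nonempty (fun i : Fin (n + 1) => f i.castSucc))
          (f (Fin.last (n + 1))) := by
  apply le_antisymm
  · apply Finset.sup'_le
    intro i _
    induction i using Fin.lastCases with
    | last => exact le_max_right _ _
    | cast i =>
      exact le_max_of_le_left (Finset.le_sup' (fun i : Fin (n+1) => f i.castSucc)
        (Finset.mem_univ i))
  · apply max_le
    · exact Finset.sup'_le _ _ fun i _ => Finset.le_sup' f (Finset.mem_univ i.castSucc)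
    · exact Finset.le_sup' f (Finset.mem_univ _)

theorem stmt1 {X : Type*} [NormedAddCommGroup X] [NormedSpace ℝ X]
    (n : ℕ) (x : Fin (n + 1) → X)
    (hx : ∀ i, x i ≠ 0)
    (horth : ∀ i j, i ≠ j → PerpInf (x i) (x j))
    (hadd : ∀ a b c : X, PerpInf a b → PerpInf a c → PerpInf a (b + c))
    (α : Fin (n + 1) → ℝ) :
    ‖∑ i, α i • x i‖ = Finset.univ.sup' Finset.univ_nonempty (fun i => ‖α i • x i‖) := by
  induction n with
  | zero => simp
  | succ n ih =>
    rw [Fin.sum_univ_castSucc]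
    have hperp : PerpInf (∑ i : Fin (n + 1), α i.castSucc • x i.castSucc)
        (α (Fin.last (n + 1)) • x (Fin.last (n + 1))) := by
      apply perp_smul_s1
      apply perp_symm
      apply perp_sum _ _ hadd
      intro i _
      apply perp_smul_s1
      apply horth
      simp [Fin.ext_iff]
      omega
    have h1 : ‖(∑ i : Fin (n + 1), α i.castSucc • x i.castSucc)
          + α (Fin.last (n + 1)) • x (Fin.last (n + 1))‖
        = max ‖∑ i : Fin (n + 1), α i.castSucc • x i.castSucc‖
            ‖α (Fin.last (n + 1)) • x (Fin.last (n + 1))‖ := by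
      simpa using hperp 1
    rw [h1, ih (fun i => x i.castSucc) (fun i => hx _)
      (fun i j hij => horth _ _ (by simpa [Fin.ext_iff] using hij)) (fun i => α i.castSucc),
      sup'_succ]
end

section
/- Let X be a real Banach space, 1 ≤ p < ∞, on which ⊥_p is additive, and let U be a total p-orthonormal set in X. Then X is isometrically isomorphic to ℓ^p(U). -/
open scoped ENNReal

lemma perpP_smul {X : Type*} [NormedAddCommGroup X] [NormedSpace ℝ X] {pr : ℝ} {x y : X}
    (h : PerpP pr x y) (c : ℝ) : PerpP pr x (c • y) := by
  intro k
  rw [smul_smul]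
  exact h (k * c)

lemma perpP_zero {X : Type*} [NormedAddCommGroup X] [NormedSpace ℝ X] {pr : ℝ}
    (hpr0 : 0 < pr) (x : X) : PerpP pr x 0 := by
  intro k
  simp [Real.zero_rpow hpr0.ne']

lemma perpP_scaled {X : Type*} [NormedAddCommGroup X] [NormedSpace ℝ X] {pr : ℝ}
    (hpr0 : 0 < pr) {x y : X} (h : PerpP pr x y) (c k : ℝ) :
    ‖c • x + k • y‖ ^ pr = ‖c • x‖ ^ pr + ‖k • y‖ ^ pr := by
  rcases eq_or_ne c 0 with rfl | hc
  · simp [Real.zero_rpow hpr0.ne']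
  · have hrw : c • x + k • y = c • (x + (k / c) • y) := by
      rw [smul_add, smul_smul, mul_div_cancel₀ _ hc]
    have h1 : ‖c • (x + (k / c) • y)‖ = |c| * ‖x + (k / c) • y‖ := by
      rw [norm_smul, Real.norm_eq_abs]
    have h2 : ‖(k / c) • y‖ = |k / c| * ‖y‖ := by
      rw [norm_smul, Real.norm_eq_abs]
    have habs : |c| * |k / c| = |k| := by
      rw [← abs_mul, mul_div_cancel₀ _ hc]
    rw [hrw, h1, Real.mul_rpow (abs_nonneg c) (norm_nonneg _), h (k / c), mul_add, h2,
      Real.mul_rpow (abs_nonneg _) (norm_nonneg _),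
      ← mul_assoc, ← Real.mul_rpow (abs_nonneg c) (abs_nonneg _), habs]
    rw [norm_smul c x, norm_smul k y, Real.norm_eq_abs, Real.norm_eq_abs,
      Real.mul_rpow (abs_nonneg c) (norm_nonneg x), Real.mul_rpow (abs_nonneg k) (norm_nonneg y)]

lemma perpP_sum {X : Type*} [NormedAddCommGroup X] [NormedSpace ℝ X] {pr : ℝ}
    (hpr0 : 0 < pr)
    (hadd : ∀ a b c : X, PerpP pr a b → PerpP pr a c → PerpP pr a (b + c))
    {U : Set X} (horth : ∀ x ∈ U, ∀ y ∈ U, x ≠ y → PerpP pr x y)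
    (u : U) (c : U → ℝ) (s : Finset U) (hus : u ∉ s) :
    PerpP pr (u : X) (∑ v ∈ s, c v • (v : X)) := by
  classical
  induction s using Finset.cons_induction with
  | empty => simpa using perpP_zero hpr0 (u : X)
  | cons v s hv ih =>
      rw [Finset.sum_cons]
      refine hadd _ _ _ (perpP_smul ?_ (c v)) (ih (fun h => hus (Finset.mem_cons_of_mem h)))
      have huv : u ≠ v := fun h => hus (h ▸ Finset.mem_cons_self v s)
      exact horth _ u.2 _ v.2 (fun h => huv (Subtype.coe_injective h))

lemma norm_sum_rpow {X : Type*} [NormedAddCommGroup X] [NormedSpace ℝ X] {pr : ℝ}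
    (hpr0 : 0 < pr)
    (hadd : ∀ a b c : X, PerpP pr a b → PerpP pr a c → PerpP pr a (b + c))
    {U : Set X} (hnorm : ∀ u ∈ U, ‖u‖ = 1)
    (horth : ∀ x ∈ U, ∀ y ∈ U, x ≠ y → PerpP pr x y)
    (c : U → ℝ) (s : Finset U) :
    ‖∑ u ∈ s, c u • (u : X)‖ ^ pr = ∑ u ∈ s, ‖c u‖ ^ pr := by
  classical
  induction s using Finset.cons_induction with
  | empty => simp [Real.zero_rpow hpr0.ne']
  | cons u s hu ih =>
      rw [Finset.sum_cons, Finset.sum_cons]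
      have hperp := perpP_sum hpr0 hadd horth u c s hu
      have := perpP_scaled hpr0 hperp (c u) 1
      rw [one_smul] at this
      rw [this, ih, norm_smul, Real.norm_eq_abs,
        Real.mul_rpow (abs_nonneg _) (norm_nonneg _), hnorm _ u.2,
        Real.one_rpow, mul_one]

theorem stmt5 {X : Type*} [NormedAddCommGroup X] [NormedSpace ℝ X] [CompleteSpace X]
    (p : ℝ≥0∞) [Fact (1 ≤ p)] (hp : p ≠ ∞)
    (hadd : ∀ a b c : X, PerpP p.toReal a b → PerpP p.toReal a c → PerpP p.toReal a (b + c))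
    (U : Set X)
    (hnorm : ∀ u ∈ U, ‖u‖ = 1)
    (horth : ∀ x ∈ U, ∀ y ∈ U, x ≠ y → PerpP p.toReal x y)
    (htotal : Dense (Submodule.span ℝ U : Set X)) :
    Nonempty (X ≃ₗᵢ[ℝ] lp (fun _ : U => ℝ) p) := by
  classical
  have hpr1 : (1 : ℝ) ≤ p.toReal := by
    have := ENNReal.toReal_mono hp (Fact.out : 1 ≤ p)
    simpa using this
  have hpr0 : (0 : ℝ) < p.toReal := lt_of_lt_of_le one_pos hpr1
  set pr := p.toReal with hprdef
  -- summability of the vector sums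
  have hsum : ∀ f : lp (fun _ : U => ℝ) p, Summable (fun u : U => f u • (u : X)) := by
    intro f
    have hg : Summable (fun u : U => ‖f u‖ ^ pr) := (lp.memℓp f).summable hpr0
    rw [summable_iff_vanishing]
    intro e he
    rcases Metric.mem_nhds_iff.mp he with ⟨ε, hε, hball⟩
    have hεp : (0 : ℝ) < ε ^ pr := Real.rpow_pos_of_pos hε pr
    obtain ⟨s, hs⟩ := hg.vanishing (Metric.ball_mem_nhds 0 hεp)
    refine ⟨s, fun t ht => ?_⟩
    apply hball
    rw [Metric.mem_ball, dist_zero_right]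
    have h1 : ‖∑ u ∈ t, f u • (u : X)‖ ^ pr = ∑ u ∈ t, ‖f u‖ ^ pr :=
      norm_sum_rpow hpr0 hadd hnorm horth _ t
    have h2 : ∑ u ∈ t, ‖f u‖ ^ pr < ε ^ pr := by
      have := hs t ht
      rw [Metric.mem_ball, dist_zero_right, Real.norm_eq_abs] at this
      exact lt_of_le_of_lt (le_abs_self _) this
    by_contra hcon
    push_neg at hcon
    have := Real.rpow_le_rpow hε.le hcon hpr0.le
    rw [h1] at this
    exact absurd h2 (not_lt.mpr this)
  -- the map
  set T : lp (fun _ : U => ℝ) p → X := fun f => ∑' u : U, f u • (u : X) with hTdef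
  have hT : ∀ f, HasSum (fun u : U => f u • (u : X)) (T f) := fun f => (hsum f).hasSum
  -- norm identity
  have hnormT : ∀ f, ‖T f‖ = ‖f‖ := by
    intro f
    have hg : Summable (fun u : U => ‖f u‖ ^ pr) := (lp.memℓp f).summable hpr0
    have h1 : Filter.Tendsto (fun s : Finset U => ‖∑ u ∈ s, f u • (u : X)‖ ^ pr)
        Filter.atTop (nhds (‖T f‖ ^ pr)) := by
      exact ((Real.continuousAt_rpow_const _ pr (Or.inr hpr0.le)).tendsto.comp (hT f).norm)
    have h2 : Filter.Tendsto (fun s : Finset U => ‖∑ u ∈ s, f u • (u : X)‖ ^ pr)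
        Filter.atTop (nhds (∑' u : U, ‖f u‖ ^ pr)) := by
      have := hg.hasSum
      refine this.congr (fun s => ?_)
      exact (norm_sum_rpow hpr0 hadd hnorm horth _ s).symm
    have heq : ‖T f‖ ^ pr = ∑' u : U, ‖f u‖ ^ pr := tendsto_nhds_unique h1 h2
    have hfn : ‖f‖ ^ pr = ∑' u : U, ‖f u‖ ^ pr := lp.norm_rpow_eq_tsum hpr0 f
    have : ‖T f‖ ^ pr = ‖f‖ ^ pr := heq.trans hfn.symm
    calc ‖T f‖ = (‖T f‖ ^ pr) ^ pr⁻¹ := (Real.rpow_rpow_inv (norm_nonneg _) hpr0.ne').symm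
      _ = (‖f‖ ^ pr) ^ pr⁻¹ := by rw [this]
      _ = ‖f‖ := Real.rpow_rpow_inv (norm_nonneg _) hpr0.ne'
  -- linearity
  have hTadd : ∀ f g, T (f + g) = T f + T g := by
    intro f g
    have : HasSum (fun u : U => (f + g) u • (u : X)) (T f + T g) := by
      have := (hT f).add (hT g)
      refine this.congr_fun fun u => ?_
      rw [lp.coeFn_add, Pi.add_apply, add_smul]
    exact this.tsum_eq
  have hTsmul : ∀ (c : ℝ) f, T (c • f) = c • T f := by
    intro c f
    have : HasSum (fun u : U => (c • f) u • (u : X)) (c • T f) := by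
      have := (hT f).const_smul c
      refine this.congr_fun fun u => ?_
      rw [lp.coeFn_smul, Pi.smul_apply, smul_assoc]
    exact this.tsum_eq
  let Tl : lp (fun _ : U => ℝ) p →ₗᵢ[ℝ] X :=
    { toFun := T
      map_add' := hTadd
      map_smul' := hTsmul
      norm_map' := hnormT }
  -- surjectivity
  have hU : U ⊆ Set.range Tl := by
    intro u hu
    refine ⟨lp.single p (⟨u, hu⟩ : U) (1 : ℝ), ?_⟩
    show T _ = u
    rw [hTdef]
    have : ∑' v : U,
        (lp.single p (⟨u, hu⟩ : U) (1 : ℝ) : lp (fun _ : U => ℝ) p) v • (v : X) = u := by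
      rw [tsum_eq_single (⟨u, hu⟩ : U)]
      · simp [lp.single_apply]
      · intro v hv
        simp [lp.single_apply, hv]
    exact this
  have hclosed : IsClosed (Set.range Tl) :=
    (Tl.isometry.isClosedEmbedding).isClosed_range
  have hspan : (Submodule.span ℝ U : Set X) ⊆ Set.range Tl := by
    have hle : Submodule.span ℝ U ≤ LinearMap.range Tl.toLinearMap :=
      Submodule.span_le.mpr (by rw [LinearMap.coe_range]; exact hU)
    intro x hx
    simpa using hle hx
  have hsurj : Function.Surjective Tl := by
    intro x
    have hx : x ∈ closure (Submodule.span ℝ U : Set X) := htotal x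
    have : x ∈ closure (Set.range Tl) := closure_mono hspan hx
    rwa [hclosed.closure_eq] at this
  exact ⟨(LinearIsometryEquiv.ofSurjective Tl hsurj).symm⟩
end

section
/- Let X be a real Banach space on which ⊥_∞ is additive, and let U be a total ∞-orthonormal set in X. Then X is isometrically isomorphic to c₀(U). -/
open scoped ENNReal

/-- `c₀(I)`: the closure, in `ℓ^∞(I)`, of the span of the standard basis vectors,
i.e. the space of functions on `I` vanishing at infinity, with the sup norm. -/
noncomputable def cZero (I : Type*) [DecidableEq I] : Submodule ℝ (lp (fun _ : I => ℝ) ∞) :=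
  (Submodule.span ℝ (Set.range fun i : I => lp.single ∞ i (1 : ℝ))).topologicalClosure

section Aux

variable {X : Type*} [NormedAddCommGroup X] [NormedSpace ℝ X]

lemma perpInf_zero (x : X) : PerpInf x 0 := by
  intro k
  simp [max_eq_left (norm_nonneg x)]

lemma perpInf_smul {x y : X} (h : PerpInf x y) (a : ℝ) : PerpInf x (a • y) := by
  intro k
  rw [smul_smul]
  exact h (k * a)

lemma perpInf_norm_add {x z : X} (h : PerpInf x z) (a : ℝ) :
    ‖a • x + z‖ = max ‖a • x‖ ‖z‖ := by
  rcases eq_or_ne a 0 with rfl | ha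
  · simp [max_eq_right (norm_nonneg z)]
  · have h1 := h a⁻¹
    have hz : a • x + z = a • (x + a⁻¹ • z) := by
      rw [smul_add, smul_smul, mul_inv_cancel₀ ha, one_smul]
    rw [hz, norm_smul, h1, mul_max_of_nonneg _ _ (norm_nonneg a), norm_smul, norm_smul,
      ← mul_assoc, ← norm_mul, mul_inv_cancel₀ ha, norm_one, one_mul]

/-- The sup-norm of a finite combination of standard basis vectors in `ℓ^∞`. -/
lemma lp_sum_single_norm {I : Type*} [DecidableEq I] (s : Finset I) (a : I → ℝ) :
    ‖(∑ i ∈ s, a i • lp.single ∞ i (1 : ℝ) : lp (fun _ : I => ℝ) ∞)‖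
      = ((s.sup fun i => ‖a i‖₊ : NNReal) : ℝ) := by
  set f : lp (fun _ : I => ℝ) ∞ := ∑ i ∈ s, a i • lp.single ∞ i (1 : ℝ) with hf
  have happ : ∀ j : I, f j = if j ∈ s then a j else 0 := by
    intro j
    have : f j = ∑ i ∈ s, a i • (lp.single ∞ i (1 : ℝ) : ∀ _ : I, ℝ) j := by
      rw [hf, lp.coeFn_sum, Finset.sum_apply]
      simp
    have h2 : ∀ i ∈ s, a i • (lp.single ∞ i (1 : ℝ) : ∀ _ : I, ℝ) j
        = if i = j then a i else 0 := by
      intro i _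
      by_cases hij : i = j
      · subst hij
        rw [if_pos rfl, lp.single_apply_self]
        simp
      · rw [if_neg hij, lp.single_apply_ne _ _ _ (Ne.symm hij)]
        simp
    rw [this, Finset.sum_congr rfl h2, Finset.sum_ite_eq' s j a]
  refine le_antisymm ?_ ?_
  · rw [lp.norm_eq_ciSup]
    refine Real.iSup_le (fun j => ?_) (by positivity)
    rw [happ j]
    by_cases hj : j ∈ s
    · rw [if_pos hj]
      have : ‖a j‖₊ ≤ s.sup fun i => ‖a i‖₊ := Finset.le_sup (f := fun i => ‖a i‖₊) hj
      calc ‖a j‖ = ((‖a j‖₊ : NNReal) : ℝ) := by rw [coe_nnnorm]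
        _ ≤ _ := by exact_mod_cast this
    · simp [if_neg hj]
  · have hb : ∀ j ∈ s, ‖a j‖₊ ≤ ‖f‖₊ := by
      intro j hj
      have := lp.norm_apply_le_norm ENNReal.top_ne_zero f j
      rw [happ j, if_pos hj] at this
      exact_mod_cast this
    have : (s.sup fun i => ‖a i‖₊) ≤ ‖f‖₊ := Finset.sup_le hb
    calc ((s.sup fun i => ‖a i‖₊ : NNReal) : ℝ) ≤ ((‖f‖₊ : NNReal) : ℝ) := by exact_mod_cast this
      _ = ‖f‖ := coe_nnnorm f

end Aux

set_option maxHeartbeats 1000000 in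
set_option synthInstance.maxHeartbeats 1000000 in
theorem stmt6 {X : Type*} [NormedAddCommGroup X] [NormedSpace ℝ X] [CompleteSpace X]
    (hadd : ∀ a b c : X, PerpInf a b → PerpInf a c → PerpInf a (b + c))
    (U : Set X) [DecidableEq U]
    (hnorm : ∀ u ∈ U, ‖u‖ = 1)
    (horth : ∀ x ∈ U, ∀ y ∈ U, x ≠ y → PerpInf x y)
    (htotal : Dense (Submodule.span ℝ U : Set X)) :
    Nonempty (X ≃ₗᵢ[ℝ] cZero U) := by
  classical
  -- a vector of `U` is orthogonal to any combination of other vectors of `U`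
  have hperp : ∀ (s : Finset U) (u : U), u ∉ s → ∀ a : U → ℝ,
      PerpInf (u : X) (∑ w ∈ s, a w • (w : X)) := by
    intro s
    induction s using Finset.induction_on with
    | empty => intro u _ a; simpa using perpInf_zero (u : X)
    | @insert w s hws ih =>
      intro u hu a
      rw [Finset.sum_insert hws]
      refine hadd _ _ _ ?_ (ih u (fun h => hu (Finset.mem_insert_of_mem h)) a)
      have hne : (u : X) ≠ (w : X) := by
        intro h
        exact hu (by rw [Finset.mem_insert]; left; exact Subtype.coe_injective h)
      exact perpInf_smul (horth u u.2 w w.2 hne) (a w)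
  -- the norm of a finite combination of vectors of `U` is the max of the coefficients
  have hnormX : ∀ (s : Finset U) (a : U → ℝ),
      ‖∑ w ∈ s, a w • (w : X)‖ = ((s.sup fun w => ‖a w‖₊ : NNReal) : ℝ) := by
    intro s a
    induction s using Finset.induction_on with
    | empty => simp
    | @insert w s hws ih =>
      rw [Finset.sum_insert hws, perpInf_norm_add (hperp s w hws a) (a w), ih,
        Finset.sup_insert, NNReal.coe_max, norm_smul, hnorm _ w.2, mul_one, coe_nnnorm]
  -- `U` is linearly independent
  have hli : LinearIndependent ℝ (fun u : U => (u : X)) := by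
    rw [linearIndependent_iff']
    intro s g hsum i hi
    have h := hnormX s g
    rw [hsum, norm_zero] at h
    have h0 : (s.sup fun w => ‖g w‖₊) = 0 := by exact_mod_cast h.symm
    have : ‖g i‖₊ ≤ (0 : NNReal) := h0 ▸ Finset.le_sup (f := fun w => ‖g w‖₊) hi
    have : ‖g i‖₊ = 0 := le_antisymm this zero_le'
    simpa using this
  set Y := Submodule.span ℝ (Set.range fun u : U => (u : X)) with hY
  have hYU : (Y : Set X) = (Submodule.span ℝ U : Set X) := by
    rw [hY, Subtype.range_coe]
  let b : Module.Basis U ℝ Y := Module.Basis.span hli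
  -- the target basis vectors, inside `cZero U`
  have hsingle_mem : ∀ u : U, lp.single ∞ u (1 : ℝ) ∈ cZero U := fun u =>
    Submodule.le_topologicalClosure _ (Submodule.subset_span ⟨u, rfl⟩)
  let fvec : U → cZero U := fun u => ⟨lp.single ∞ u 1, hsingle_mem u⟩
  let S : Y →ₗ[ℝ] cZero U := b.constr ℝ fvec
  -- `S` is isometric
  have hSiso : ∀ x : Y, ‖S x‖ = ‖x‖ := by
    intro x
    have hx : x = ∑ u ∈ (b.repr x).support, (b.repr x) u • b u := by
      conv_lhs => rw [← b.linearCombination_repr x]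
      rw [Finsupp.linearCombination_apply, Finsupp.sum]
    set s := (b.repr x).support
    set c : U → ℝ := fun u => (b.repr x) u
    have h1 : ‖x‖ = ((s.sup fun w => ‖c w‖₊ : NNReal) : ℝ) := by
      rw [← hnormX s c]
      have : ((x : X)) = ∑ w ∈ s, c w • (w : X) := by
        conv_lhs => rw [hx]
        push_cast
        refine Finset.sum_congr rfl fun w _ => ?_
        rw [Module.Basis.span_apply]
      rw [← this]
      rfl
    have h2 : ‖S x‖ = ((s.sup fun w => ‖c w‖₊ : NNReal) : ℝ) := by
      rw [← lp_sum_single_norm s c]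
      have : ((S x : lp (fun _ : U => ℝ) ∞)) = ∑ w ∈ s, c w • lp.single ∞ w (1 : ℝ) := by
        conv_lhs => rw [hx]
        rw [map_sum]
        push_cast
        refine Finset.sum_congr rfl fun w _ => ?_
        rw [map_smul, Module.Basis.constr_basis]
        rfl
      rw [← this]
      rfl
    rw [h1, h2]
  haveI : CompleteSpace (cZero U) :=
    (Submodule.isClosed_topologicalClosure _).completeSpace_coe
  -- extend `S` to all of `X` by density
  let Scont : Y →L[ℝ] cZero U :=
    LinearMap.mkContinuous S 1 fun x => by rw [hSiso, one_mul]
  have hdense : DenseRange (Y.subtypeL : Y →L[ℝ] X) := by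
    have hr : Set.range (Y.subtypeL : Y →L[ℝ] X) = (Y : Set X) := Subtype.range_coe
    rw [DenseRange, hr, hYU]
    exact htotal
  have h_e : IsUniformInducing (Y.subtypeL : Y →L[ℝ] X) :=
    isometry_subtype_coe.isUniformInducing
  let g : X →L[ℝ] cZero U := Scont.extend Y.subtypeL
  have hg_eq : ∀ y : Y, g (Y.subtypeL y) = Scont y := fun y =>
    ContinuousLinearMap.extend_eq Scont hdense h_e y
  -- `g` is isometric, by density
  have hgiso : ∀ x : X, ‖g x‖ = ‖x‖ := by
    have : (fun x : X => ‖g x‖) = fun x : X => ‖x‖ := by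
      refine Continuous.ext_on hdense (by fun_prop) (by fun_prop) ?_
      rintro _ ⟨y, rfl⟩
      simp only
      rw [hg_eq y]
      have : ‖Scont y‖ = ‖S y‖ := rfl
      rw [this, hSiso]
      rfl
    exact fun x => congrFun this x
  let T : X →ₗᵢ[ℝ] cZero U := ⟨g.toLinearMap, hgiso⟩
  -- `T` hits the basis vectors
  have hTu : ∀ u : U, T ((u : U) : X) = fvec u := by
    intro u
    have hmem : ((u : U) : X) ∈ Y := Submodule.subset_span ⟨u, rfl⟩
    have hb : (⟨(u : U), hmem⟩ : Y) = b u := by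
      apply Subtype.ext
      rw [Module.Basis.span_apply]
    have : T ((u : U) : X) = g (Y.subtypeL ⟨(u : U), hmem⟩) := rfl
    rw [this, hg_eq]
    have : Scont (⟨(u : U), hmem⟩ : Y) = S (⟨(u : U), hmem⟩ : Y) := rfl
    rw [this, hb]
    exact Module.Basis.constr_basis b ℝ fvec u
  -- the range of `T` is closed and contains a dense set, so `T` is surjective
  have hclosed : IsClosed (Set.range T) :=
    T.isometry.isClosedEmbedding.isClosed_range
  have hsurj : Function.Surjective T := by
    intro y
    have hy : (y : lp (fun _ : U => ℝ) ∞) ∈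
        closure (Submodule.span ℝ (Set.range fun i : U => lp.single ∞ i (1 : ℝ)) :
          Set (lp (fun _ : U => ℝ) ∞)) := y.2
    haveI : FrechetUrysohnSpace (lp (fun _ : U => ℝ) ∞) :=
      FirstCountableTopology.frechetUrysohnSpace
    rw [mem_closure_iff_seq_limit] at hy
    obtain ⟨z, hz, hzlim⟩ := hy
    -- lift the approximating sequence into `cZero U`
    let zc : ℕ → cZero U := fun n => ⟨z n, Submodule.le_topologicalClosure _ (hz n)⟩
    have hzc_mem : ∀ n, zc n ∈ Set.range T := by
      intro n
      have hmap : Submodule.span ℝ (Set.range fun i : U => lp.single ∞ i (1 : ℝ)) =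
          Submodule.map (cZero U).subtype (Submodule.span ℝ (Set.range fvec)) := by
        rw [Submodule.map_span]
        congr 1
        ext w
        constructor
        · rintro ⟨i, rfl⟩
          exact ⟨fvec i, ⟨i, rfl⟩, rfl⟩
        · rintro ⟨-, ⟨i, rfl⟩, rfl⟩
          exact ⟨i, rfl⟩
      have := hz n
      rw [hmap] at this
      obtain ⟨w, hw, hwz⟩ := this
      have hwzc : w = zc n := Subtype.ext hwz
      rw [← hwzc]
      have hle : Submodule.span ℝ (Set.range fvec) ≤ LinearMap.range T.toLinearMap := by
        rw [Submodule.span_le]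
        rintro - ⟨i, rfl⟩
        exact ⟨(i : U), hTu i⟩
      obtain ⟨x, hx⟩ := hle hw
      exact ⟨x, hx⟩
    have hzc_lim : Filter.Tendsto zc Filter.atTop (nhds y) := by
      rw [tendsto_subtype_rng]
      exact hzlim
    have : y ∈ closure (Set.range T) :=
      mem_closure_of_tendsto hzc_lim (Filter.Eventually.of_forall hzc_mem)
    rwa [hclosed.closure_eq] at this
  exact ⟨LinearIsometryEquiv.ofSurjective T hsurj⟩
end

section
/- Let V be an ordered normed space satisfying condition (O.p.1) for 1 ≤ p < ∞: u ≤ v ≤ w implies ‖v‖ ≤ (‖u‖^p + ‖w‖^p)^{1/p}. If u₁, u₂ ∈ V⁺ with u₁ ⊥_p u₂ and u₁ − u₂ ∈ V⁺, then u₂ = 0. -/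
theorem stmt7 {V : Type*} [NormedAddCommGroup V] [NormedSpace ℝ V] (C : Set V)
    -- `C` is a norm-closed, proper, generating cone:
    (hCadd : ∀ x ∈ C, ∀ y ∈ C, x + y ∈ C)
    (hCsmul : ∀ x ∈ C, ∀ r : ℝ, 0 ≤ r → r • x ∈ C)
    (hCproper : ∀ x, x ∈ C → -x ∈ C → x = 0)
    (hCgen : ∀ x : V, ∃ y ∈ C, ∃ z ∈ C, x = y - z)
    (hCclosed : IsClosed C)
    (p : ℝ) (hp : 1 ≤ p)
    -- (O.p.1): `u ≤ v ≤ w` implies `‖v‖ ≤ (‖u‖ ^ p + ‖w‖ ^ p) ^ (1/p)`: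
    (hOp1 : ∀ u v w : V, v - u ∈ C → w - v ∈ C → ‖v‖ ^ p ≤ ‖u‖ ^ p + ‖w‖ ^ p)
    (u₁ u₂ : V) (hu₁ : u₁ ∈ C) (hu₂ : u₂ ∈ C)
    (hperp : PerpP p u₁ u₂) (hdiff : u₁ - u₂ ∈ C) :
    u₂ = 0 := by
  have h := hOp1 (-u₁) (u₂ - u₁) 0
    (by have : u₂ - u₁ - -u₁ = u₂ := by abel
        rw [this]; exact hu₂)
    (by have : (0 : V) - (u₂ - u₁) = u₁ - u₂ := by abel
        rw [this]; exact hdiff)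
  have hk := hperp (-1)
  have h1 : u₁ + (-1 : ℝ) • u₂ = u₁ - u₂ := by
    rw [neg_one_smul]; abel
  have h2 : ‖(-1 : ℝ) • u₂‖ = ‖u₂‖ := by
    rw [neg_one_smul, norm_neg]
  rw [h1, h2] at hk
  have h3 : ‖u₂ - u₁‖ = ‖u₁ - u₂‖ := norm_sub_rev _ _
  have h4 : ‖(0 : V)‖ ^ p = 0 := by
    rw [norm_zero]; exact Real.zero_rpow (by linarith)
  rw [h3, hk, h4, norm_neg] at h
  have h5 : ‖u₂‖ ^ p ≤ 0 := by linarith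
  by_contra hne
  have hpos : (0 : ℝ) < ‖u₂‖ := norm_pos_iff.mpr hne
  have : (0 : ℝ) < ‖u₂‖ ^ p := Real.rpow_pos_of_pos hpos p
  linarith
end

section
/- Let V be an ordered normed space satisfying (O.p.1), 1 ≤ p < ∞, in which ⊥_p is additive on V⁺, and let U ⊆ V⁺ be a p-orthonormal set. Then for distinct u₁, …, uₙ ∈ U and scalars α₁, …, αₙ, the combination ∑ αᵢ uᵢ lies in V⁺ if and only if all αᵢ ≥ 0. -/
theorem stmt8 {V : Type*} [NormedAddCommGroup V] [NormedSpace ℝ V] (C : Set V)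
    -- `C` is a norm-closed, proper, generating cone:
    (hCadd : ∀ x ∈ C, ∀ y ∈ C, x + y ∈ C)
    (hCsmul : ∀ x ∈ C, ∀ r : ℝ, 0 ≤ r → r • x ∈ C)
    (hCproper : ∀ x, x ∈ C → -x ∈ C → x = 0)
    (hCgen : ∀ x : V, ∃ y ∈ C, ∃ z ∈ C, x = y - z)
    (hCclosed : IsClosed C)
    (p : ℝ) (hp : 1 ≤ p)
    -- (O.p.1):
    (hOp1 : ∀ u v w : V, v - u ∈ C → w - v ∈ C → ‖v‖ ^ p ≤ ‖u‖ ^ p + ‖w‖ ^ p)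
    -- `⊥_p` is additive on `V⁺`:
    (hadd : ∀ a b c : V, a ∈ C → b ∈ C → c ∈ C →
      PerpP p a b → PerpP p a c → PerpP p a (b + c))
    -- `U ⊆ V⁺` is a `p`-orthonormal set:
    (U : Set V) (hUC : U ⊆ C)
    (hUnorm : ∀ u ∈ U, ‖u‖ = 1)
    (hUorth : ∀ x ∈ U, ∀ y ∈ U, x ≠ y → PerpP p x y)
    (n : ℕ) (u : Fin n → V) (hu : ∀ i, u i ∈ U) (huinj : Function.Injective u)
    (α : Fin n → ℝ) :
    (∑ i, α i • u i) ∈ C ↔ ∀ i, 0 ≤ α i := by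
  have hp0 : p ≠ 0 := by intro h; rw [h] at hp; linarith
  have h0C : (0 : V) ∈ C := by
    obtain ⟨y, hy, -⟩ := hCgen 0
    simpa using hCsmul y hy 0 le_rfl
  have hsumC : ∀ f : Fin n → V, (∀ i, f i ∈ C) → (∑ i, f i) ∈ C := fun f hf =>
    Finset.sum_induction f (· ∈ C) (fun a b ha hb => hCadd a ha b hb) h0C (fun i _ => hf i)
  constructor
  · intro hx j
    by_contra hneg
    push_neg at hneg
    have hαj : α j ≠ 0 := ne_of_lt hneg
    have hujU := hu j
    have hujC : u j ∈ C := hUC hujU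
    -- basic perpendicularity facts
    have hperp0 : PerpP p (u j) 0 := by
      intro k
      simp [Real.zero_rpow hp0]
    have hperpsmul : ∀ (v : V) (c : ℝ), PerpP p (u j) v → PerpP p (u j) (c • v) := by
      intro v c h k
      have := h (k * c)
      simpa [mul_smul] using this
    set x := ∑ i, α i • u i with hxdef
    set γ : Fin n → ℝ := fun i => if i = j then 0 else max (α i) 0 with hγ
    have hγ0 : ∀ i, 0 ≤ γ i := by
      intro i; simp only [hγ]
      split
      · exact le_rfl
      · exact le_max_right _ _
    set η : Fin n → ℝ := fun i => if i = j then α j else max (α i) 0 with hη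
    set z := ∑ i, γ i • u i with hz
    set y := ∑ i, η i • u i with hy
    have hzCP : z ∈ C ∧ PerpP p (u j) z := by
      refine Finset.sum_induction _ (fun v => v ∈ C ∧ PerpP p (u j) v)
        (fun a b ha hb => ⟨hCadd a ha.1 b hb.1, hadd _ _ _ hujC ha.1 hb.1 ha.2 hb.2⟩)
        ⟨h0C, hperp0⟩ (fun i _ => ⟨hCsmul _ (hUC (hu i)) _ (hγ0 i), ?_⟩)
      by_cases hij : i = j
      · have : γ i = 0 := by simp [hγ, hij]
        rw [this, zero_smul]
        exact hperp0
      · exact hperpsmul _ _ (hUorth _ hujU _ (hu i) (fun h => hij (huinj h.symm)))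
    -- y = x + (nonnegative combination), hence y ∈ C
    have hyC : y ∈ C := by
      have hyx : y = x + ∑ i, (η i - α i) • u i := by
        rw [hxdef, ← Finset.sum_add_distrib]
        refine Finset.sum_congr rfl fun i _ => ?_
        rw [← add_smul]
        congr 1; ring
      rw [hyx]
      refine hCadd _ hx _ (hsumC _ fun i => hCsmul _ (hUC (hu i)) _ ?_)
      simp only [hη, sub_nonneg]
      by_cases hij : i = j
      · simp [hij]
      · simp [hij, le_max_left]
    -- z - y = (-α j) • u j
    have hzy : z - y = (-α j) • u j := by
      rw [hz, hy, ← Finset.sum_sub_distrib]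
      have : ∀ i, (γ i • u i - η i • u i) = (if i = j then (-α j) • u j else 0) := by
        intro i
        by_cases hij : i = j
        · simp [hγ, hη, hij, sub_smul, neg_smul]
        · simp [hγ, hη, hij]
      rw [Finset.sum_congr rfl (fun i _ => this i), Finset.sum_ite_eq' Finset.univ j]
      simp
    -- hence y = z + α j • u j
    have hyz : y = z + α j • u j := by
      have := hzy
      rw [sub_eq_iff_eq_add] at this
      rw [this, neg_smul]
      abel
    -- norm computation: ‖y‖ ^ p = |α j| ^ p + ‖z‖ ^ p
    have hnormy : ‖y‖ ^ p = |α j| ^ p + ‖z‖ ^ p := by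
      have hk := hzCP.2 (1 / α j)
      have hscale : y = (α j) • (u j + (1 / α j) • z) := by
        rw [smul_add, smul_smul, mul_one_div, div_self hαj, one_smul, hyz, add_comm]
      have h1 : ‖y‖ = |α j| * ‖u j + (1 / α j) • z‖ := by
        rw [hscale, norm_smul, Real.norm_eq_abs]
      rw [h1, Real.mul_rpow (abs_nonneg _) (norm_nonneg _), hk, hUnorm _ hujU,
        norm_smul, Real.norm_eq_abs, Real.mul_rpow (abs_nonneg _) (norm_nonneg _),
        Real.one_rpow, mul_add, mul_one, ← mul_assoc,
        ← Real.mul_rpow (abs_nonneg _) (abs_nonneg _), ← abs_mul,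
        mul_one_div, div_self hαj, abs_one, Real.one_rpow, one_mul]
    -- (O.p.1) with 0 ≤ y ≤ z
    have hineq : ‖y‖ ^ p ≤ ‖(0 : V)‖ ^ p + ‖z‖ ^ p := by
      refine hOp1 0 y z (by simpa using hyC) ?_
      rw [hzy]
      exact hCsmul _ hujC _ (by linarith)
    rw [norm_zero, Real.zero_rpow hp0, zero_add, hnormy] at hineq
    have hpos : 0 < |α j| ^ p := Real.rpow_pos_of_pos (abs_pos.mpr hαj) p
    linarith
  · intro h
    exact hsumC _ fun i => hCsmul _ (hUC (hu i)) _ (h i)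
end

section
/- Let V be an order smooth ∞-normed space and u₁, u₂ ∈ V⁺ \ {0}. If ‖ ‖u₁‖⁻¹u₁ + ‖u₂‖⁻¹u₂ ‖ = 1, then u₁ ⊥_∞ u₂, i.e., ‖u₁ + k·u₂‖ = max(‖u₁‖, ‖k·u₂‖) for all k ∈ ℝ. -/
theorem stmt10 {V : Type*} [NormedAddCommGroup V] [NormedSpace ℝ V] (C : Set V)
    -- `C` is a norm-closed, proper, generating cone:
    (hCadd : ∀ x ∈ C, ∀ y ∈ C, x + y ∈ C)
    (hCsmul : ∀ x ∈ C, ∀ r : ℝ, 0 ≤ r → r • x ∈ C)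
    (hCproper : ∀ x, x ∈ C → -x ∈ C → x = 0)
    (hCgen : ∀ x : V, ∃ y ∈ C, ∃ z ∈ C, x = y - z)
    (hCclosed : IsClosed C)
    -- (O.∞.1):
    (hO1 : ∀ u v w : V, v - u ∈ C → w - v ∈ C → ‖v‖ ≤ max ‖u‖ ‖w‖)
    -- (O.∞.2):
    (hO2 : ∀ v : V, ∀ ε : ℝ, 0 < ε → ∃ u₁ ∈ C, ∃ u₂ ∈ C,
      v = u₁ - u₂ ∧ max ‖u₁‖ ‖u₂‖ ≤ ‖v‖ + ε)
    (u₁ u₂ : V) (hu₁ : u₁ ∈ C) (hu₂ : u₂ ∈ C) (hn₁ : u₁ ≠ 0) (hn₂ : u₂ ≠ 0)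
    (h : ‖‖u₁‖⁻¹ • u₁ + ‖u₂‖⁻¹ • u₂‖ = 1) :
    PerpInf u₁ u₂ := by
  have ha : (0:ℝ) < ‖u₁‖ := norm_pos_iff.mpr hn₁
  have hb : (0:ℝ) < ‖u₂‖ := norm_pos_iff.mpr hn₂
  set a : ℝ := ‖u₁‖ with ha'
  set b : ℝ := ‖u₂‖ with hb'
  set v : V := a⁻¹ • u₁ + b⁻¹ • u₂ with hv
  have hva : a * a⁻¹ = 1 := mul_inv_cancel₀ (ne_of_gt ha)
  have hvb : b * b⁻¹ = 1 := mul_inv_cancel₀ (ne_of_gt hb)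
  have hvexp : ∀ c : ℝ, c • v = (c * a⁻¹) • u₁ + (c * b⁻¹) • u₂ := by
    intro c; rw [hv]; module
  intro k
  have hnk : ‖k • u₂‖ = |k| * b := by rw [norm_smul, Real.norm_eq_abs]
  rcases le_or_gt 0 k with hk | hk
  · -- k ≥ 0
    have hku : k • u₂ ∈ C := hCsmul u₂ hu₂ k hk
    have hsum : u₁ + k • u₂ ∈ C := hCadd u₁ hu₁ _ hku
    -- lower bounds
    have l1 : a ≤ ‖u₁ + k • u₂‖ := by
      have := hO1 0 u₁ (u₁ + k • u₂) (by simpa using hu₁) (by simpa using hku)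
      simpa [max_eq_right (norm_nonneg (u₁ + k • u₂))] using this
    have l2 : ‖k • u₂‖ ≤ ‖u₁ + k • u₂‖ := by
      have := hO1 0 (k • u₂) (u₁ + k • u₂) (by simpa using hku)
        (by simpa [add_sub_cancel_right] using hu₁)
      simpa [max_eq_right (norm_nonneg (u₁ + k • u₂))] using this
    -- upper bound
    set M : ℝ := max a (k * b) with hM
    have hMa : a ≤ M := le_max_left _ _
    have hMb : k * b ≤ M := le_max_right _ _
    have hM0 : 0 ≤ M := le_trans (le_of_lt ha) hMa
    have hc1 : (0:ℝ) ≤ M * a⁻¹ - 1 := by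
      have h1 : a * a⁻¹ ≤ M * a⁻¹ :=
        mul_le_mul_of_nonneg_right hMa (le_of_lt (inv_pos.mpr ha))
      linarith [hva]
    have hc2 : (0:ℝ) ≤ M * b⁻¹ - k := by
      have h1 : (k * b) * b⁻¹ ≤ M * b⁻¹ :=
        mul_le_mul_of_nonneg_right hMb (le_of_lt (inv_pos.mpr hb))
      have h2 : (k * b) * b⁻¹ = k := by rw [mul_assoc, hvb, mul_one]
      linarith
    have hdiff : M • v - (u₁ + k • u₂) =
        (M * a⁻¹ - 1) • u₁ + (M * b⁻¹ - k) • u₂ := by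
      rw [hvexp M]; module
    have hmem : M • v - (u₁ + k • u₂) ∈ C := by
      rw [hdiff]
      exact hCadd _ (hCsmul u₁ hu₁ _ hc1) _ (hCsmul u₂ hu₂ _ hc2)
    have hub := hO1 0 (u₁ + k • u₂) (M • v) (by simpa using hsum) hmem
    have hMv : ‖M • v‖ = M := by
      rw [norm_smul, Real.norm_eq_abs, abs_of_nonneg hM0, h, mul_one]
    have hub' : ‖u₁ + k • u₂‖ ≤ M := by
      rw [hMv] at hub
      simpa [max_eq_right hM0] using hub
    have hmax : max ‖u₁‖ ‖k • u₂‖ = M := by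
      rw [hnk, abs_of_nonneg hk]
    exact le_antisymm (by rw [hmax]; exact hub') (max_le l1 l2)
  · -- k < 0
    set t : ℝ := -k with ht
    have ht0 : 0 < t := by simp [ht]; linarith
    -- upper bound: -(t•u₂) ≤ u₁ + k•u₂ ≤ u₁
    have hm1 : (u₁ + k • u₂) - (-(t • u₂)) ∈ C := by
      have : (u₁ + k • u₂) - (-(t • u₂)) = u₁ := by rw [ht]; module
      rw [this]; exact hu₁
    have hm2 : u₁ - (u₁ + k • u₂) ∈ C := by
      have : u₁ - (u₁ + k • u₂) = t • u₂ := by rw [ht]; module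
      rw [this]; exact hCsmul u₂ hu₂ t (le_of_lt ht0)
    have hub := hO1 (-(t • u₂)) (u₁ + k • u₂) u₁ hm1 hm2
    have hnt : ‖-(t • u₂)‖ = ‖k • u₂‖ := by
      rw [norm_neg, norm_smul, norm_smul, Real.norm_eq_abs, Real.norm_eq_abs,
        ht, abs_neg]
    have hub' : ‖u₁ + k • u₂‖ ≤ max ‖u₁‖ ‖k • u₂‖ := by
      rw [hnt] at hub
      rwa [max_comm] at hub
    -- lower bound ≥ a
    have e1 : u₁ + k • u₂ = (1 + t * b * a⁻¹) • u₁ - (t * b) • v := by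
      rw [hvexp (t * b)]
      have hbb : t * b * b⁻¹ = t := by rw [mul_assoc, hvb, mul_one]
      rw [hbb, ht]
      module
    have l1 : a ≤ ‖u₁ + k • u₂‖ := by
      rw [e1]
      have htri := norm_sub_norm_le ((1 + t * b * a⁻¹) • u₁) ((t * b) • v)
      have hn1 : ‖(1 + t * b * a⁻¹) • u₁‖ = (1 + t * b * a⁻¹) * a := by
        rw [norm_smul, Real.norm_eq_abs, abs_of_nonneg]
        positivity
      have hn2 : ‖(t * b) • v‖ = t * b := by
        rw [norm_smul, Real.norm_eq_abs, h, mul_one, abs_of_nonneg]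
        positivity
      rw [hn1, hn2] at htri
      have : (1 + t * b * a⁻¹) * a - t * b = a := by
        field_simp
        ring
      linarith
    -- lower bound ≥ t * b
    have e2 : -(u₁ + k • u₂) = (t + a * b⁻¹) • u₂ - a • v := by
      rw [hvexp a, hva, ht]
      module
    have l2 : ‖k • u₂‖ ≤ ‖u₁ + k • u₂‖ := by
      have hkb : ‖k • u₂‖ = t * b := by
        rw [hnk, abs_of_neg hk, ht]
      rw [hkb, ← norm_neg (u₁ + k • u₂), e2]
      have htri := norm_sub_norm_le ((t + a * b⁻¹) • u₂) (a • v)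
      have hn1 : ‖(t + a * b⁻¹) • u₂‖ = (t + a * b⁻¹) * b := by
        rw [norm_smul, Real.norm_eq_abs, abs_of_nonneg]
        positivity
      have hn2 : ‖a • v‖ = a := by
        rw [norm_smul, Real.norm_eq_abs, h, mul_one, abs_of_nonneg (le_of_lt ha)]
      rw [hn1, hn2] at htri
      have : (t + a * b⁻¹) * b - a = t * b := by
        field_simp
        ring
      linarith
    exact le_antisymm hub' (max_le l1 l2)
end

section
/- Let V be an order smooth ∞-normed space and u₁, u₂ ∈ V⁺ \ {0} with u₁ ⊥_∞ u₂. Let f_i ∈ V'⁺ with ‖f_i‖ = 1 and f_i(u_i) = ‖u_i‖ (i = 1,2). Then f₁(u₂) = 0 = f₂(u₁), and the restrictions g_i of f_i to the span W of {u₁, u₂} satisfy ‖α₁g₁ + α₂g₂‖_{W'} = |α₁| + |α₂| for all real α₁, α₂; in particular g₁ ⊥_1 g₂. -/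
set_option maxHeartbeats 1000000
set_option synthInstance.maxHeartbeats 400000


/-- `f ⊥_1 g`: `‖f + k • g‖ = ‖f‖ + ‖k • g‖` for all `k : ℝ`. -/
def PerpOne {X : Type*} [NormedAddCommGroup X] [NormedSpace ℝ X] (x y : X) : Prop :=
  ∀ k : ℝ, ‖x + k • y‖ = ‖x‖ + ‖k • y‖

theorem stmt11 {V : Type*} [NormedAddCommGroup V] [NormedSpace ℝ V] (C : Set V)
    -- `C` is a norm-closed, proper, generating cone:
    (hCadd : ∀ x ∈ C, ∀ y ∈ C, x + y ∈ C)
    (hCsmul : ∀ x ∈ C, ∀ r : ℝ, 0 ≤ r → r • x ∈ C)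
    (hCproper : ∀ x, x ∈ C → -x ∈ C → x = 0)
    (hCgen : ∀ x : V, ∃ y ∈ C, ∃ z ∈ C, x = y - z)
    (hCclosed : IsClosed C)
    -- (O.∞.1):
    (hO1 : ∀ u v w : V, v - u ∈ C → w - v ∈ C → ‖v‖ ≤ max ‖u‖ ‖w‖)
    -- (O.∞.2):
    (hO2 : ∀ v : V, ∀ ε : ℝ, 0 < ε → ∃ u₁ ∈ C, ∃ u₂ ∈ C,
      v = u₁ - u₂ ∧ max ‖u₁‖ ‖u₂‖ ≤ ‖v‖ + ε)
    (u₁ u₂ : V) (hu₁ : u₁ ∈ C) (hu₂ : u₂ ∈ C) (hn₁ : u₁ ≠ 0) (hn₂ : u₂ ≠ 0)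
    (hperp : PerpInf u₁ u₂)
    (f₁ f₂ : V →L[ℝ] ℝ)
    (hf₁pos : ∀ x ∈ C, 0 ≤ f₁ x) (hf₂pos : ∀ x ∈ C, 0 ≤ f₂ x)
    (hf₁ : ‖f₁‖ = 1) (hf₂ : ‖f₂‖ = 1)
    (hs₁ : f₁ u₁ = ‖u₁‖) (hs₂ : f₂ u₂ = ‖u₂‖)
    -- `W` is the span of `u₁, u₂` and `gᵢ = fᵢ|_W`:
    (W : Submodule ℝ V) (hW : W = Submodule.span ℝ {u₁, u₂})
    (g₁ g₂ : W →L[ℝ] ℝ) (hg₁ : g₁ = f₁.comp W.subtypeL) (hg₂ : g₂ = f₂.comp W.subtypeL) :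
    f₁ u₂ = 0 ∧ f₂ u₁ = 0 ∧
      (∀ α₁ α₂ : ℝ, ‖α₁ • g₁ + α₂ • g₂‖ = |α₁| + |α₂|) ∧ PerpOne g₁ g₂ := by
  have hn₁' : (0:ℝ) < ‖u₁‖ := norm_pos_iff.mpr hn₁
  have hn₂' : (0:ℝ) < ‖u₂‖ := norm_pos_iff.mpr hn₂
  -- the norm on the span is a max-norm
  have hnorm : ∀ a b : ℝ, ‖a • u₁ + b • u₂‖ = max (|a| * ‖u₁‖) (|b| * ‖u₂‖) := by
    intro a b
    by_cases ha : a = 0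
    · subst ha
      rw [zero_smul, zero_add, norm_smul, Real.norm_eq_abs, abs_zero, zero_mul,
        max_eq_right (by positivity)]
    · have : a • u₁ + b • u₂ = a • (u₁ + (b / a) • u₂) := by
        rw [smul_add, smul_smul, mul_div_cancel₀ _ ha]
      rw [this, norm_smul, Real.norm_eq_abs, hperp (b / a), norm_smul, Real.norm_eq_abs,
        mul_max_of_nonneg _ _ (abs_nonneg a)]
      have h : |a| * (|b / a| * ‖u₂‖) = |b| * ‖u₂‖ := by
        rw [← mul_assoc, ← abs_mul, mul_div_cancel₀ _ ha]
      rw [h]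
  -- vanishing of the cross terms
  have hcross : ∀ (f : V →L[ℝ] ℝ) (v w : V), ‖f‖ = 1 → (0 ≤ f w) → f v = ‖v‖ →
      (0:ℝ) < ‖v‖ → (0:ℝ) < ‖w‖ →
      (∀ k : ℝ, 0 ≤ k → ‖v + k • w‖ = max ‖v‖ (k * ‖w‖)) → f w = 0 := by
    intro f v w hf hfw hfv hv hw hvw
    by_contra h
    have hpos : 0 < f w := lt_of_le_of_ne hfw (Ne.symm h)
    set k : ℝ := ‖v‖ / ‖w‖ with hk
    have hk0 : 0 < k := div_pos hv hw
    have h1 : f (v + k • w) = ‖v‖ + k * f w := by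
      simp [map_add, map_smul, hfv, smul_eq_mul]
    have h2 : f (v + k • w) ≤ ‖v‖ := by
      calc f (v + k • w) ≤ ‖f‖ * ‖v + k • w‖ :=
            le_trans (le_abs_self _) (f.le_opNorm _)
        _ = max ‖v‖ (k * ‖w‖) := by rw [hf, one_mul, hvw k hk0.le]
        _ = ‖v‖ := by rw [hk, div_mul_cancel₀ _ (ne_of_gt hw), max_self]
    have hkp := mul_pos hk0 hpos
    linarith
  have h12 : f₁ u₂ = 0 := by
    refine hcross f₁ u₁ u₂ hf₁ (hf₁pos u₂ hu₂) hs₁ hn₁' hn₂' ?_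
    intro k hk
    have := hnorm 1 k
    simpa [abs_of_nonneg hk] using this
  have h21 : f₂ u₁ = 0 := by
    refine hcross f₂ u₂ u₁ hf₂ (hf₂pos u₁ hu₁) hs₂ hn₂' hn₁' ?_
    intro k hk
    have := hnorm k 1
    rw [add_comm] at this
    simpa [abs_of_nonneg hk, max_comm] using this
  have hsgn : ∀ t : ℝ, t * Real.sign t = |t| := by
    intro t
    rcases lt_trichotomy t 0 with h | h | h
    · rw [Real.sign_of_neg h, abs_of_neg h]; ring
    · simp [h]
    · rw [Real.sign_of_pos h, abs_of_pos h]; ring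
  have hsgnabs : ∀ t : ℝ, |Real.sign t| ≤ 1 := by
    intro t
    rcases lt_trichotomy t 0 with h | h | h
    · rw [Real.sign_of_neg h]; simp
    · simp [h]
    · rw [Real.sign_of_pos h]; simp
  have hmain : ∀ α₁ α₂ : ℝ, ‖α₁ • g₁ + α₂ • g₂‖ = |α₁| + |α₂| := by
    intro α β
    apply le_antisymm
    · apply ContinuousLinearMap.opNorm_le_bound _ (by positivity)
      intro x
      subst hg₁ hg₂
      simp only [ContinuousLinearMap.add_apply, ContinuousLinearMap.coe_smul',
        Pi.smul_apply, ContinuousLinearMap.coe_comp', Function.comp_apply,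
        Submodule.coe_subtypeL', Submodule.coe_subtype, smul_eq_mul]
      have hx : ‖x‖ = ‖(x : V)‖ := rfl
      calc ‖α * f₁ (x : V) + β * f₂ (x : V)‖
          ≤ ‖α * f₁ (x : V)‖ + ‖β * f₂ (x : V)‖ := norm_add_le _ _
        _ = |α| * ‖f₁ (x : V)‖ + |β| * ‖f₂ (x : V)‖ := by
            simp [Real.norm_eq_abs, abs_mul]
        _ ≤ |α| * (‖f₁‖ * ‖(x : V)‖) + |β| * (‖f₂‖ * ‖(x : V)‖) := by
            gcongr
            · exact f₁.le_opNorm _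
            · exact f₂.le_opNorm _
        _ = (|α| + |β|) * ‖x‖ := by rw [hf₁, hf₂, hx]; ring
    · set a : ℝ := Real.sign α / ‖u₁‖ with haa
      set b : ℝ := Real.sign β / ‖u₂‖ with hbb
      set w : V := a • u₁ + b • u₂ with hw'
      have hwW : w ∈ W := by
        rw [hW]
        exact Submodule.add_mem _
          (Submodule.smul_mem _ _ (Submodule.subset_span (by simp)))
          (Submodule.smul_mem _ _ (Submodule.subset_span (by simp)))
      have hwnorm : ‖w‖ ≤ 1 := by
        rw [hw', hnorm]
        apply max_le
        · rw [haa, abs_div, abs_of_pos hn₁', div_mul_cancel₀ _ (ne_of_gt hn₁')]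
          exact hsgnabs α
        · rw [hbb, abs_div, abs_of_pos hn₂', div_mul_cancel₀ _ (ne_of_gt hn₂')]
          exact hsgnabs β
      have hf₁w : f₁ w = Real.sign α := by
        rw [hw']
        simp only [map_add, map_smul, smul_eq_mul, hs₁, h12, mul_zero, add_zero, haa]
        field_simp
      have hf₂w : f₂ w = Real.sign β := by
        rw [hw']
        simp only [map_add, map_smul, smul_eq_mul, hs₂, h21, mul_zero, zero_add, hbb]
        field_simp
      have hval : (α • g₁ + β • g₂) ⟨w, hwW⟩ = |α| + |β| := by
        subst hg₁ hg₂
        simp only [ContinuousLinearMap.add_apply, ContinuousLinearMap.coe_smul',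
          Pi.smul_apply, ContinuousLinearMap.coe_comp', Function.comp_apply,
          Submodule.coe_subtypeL', Submodule.coe_subtype, smul_eq_mul]
        rw [hf₁w, hf₂w, hsgn α, hsgn β]
      have hle := (α • g₁ + β • g₂).le_opNorm ⟨w, hwW⟩
      rw [hval] at hle
      have hwn : ‖(⟨w, hwW⟩ : W)‖ = ‖w‖ := rfl
      calc |α| + |β| ≤ |α| + |β| := le_refl _
        _ ≤ ‖α • g₁ + β • g₂‖ * ‖(⟨w, hwW⟩ : W)‖ := le_trans (le_abs_self _) hle
        _ ≤ ‖α • g₁ + β • g₂‖ * 1 := by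
            rw [hwn]
            exact mul_le_mul_of_nonneg_left hwnorm ((α • g₁ + β • g₂).opNorm_nonneg)
        _ = ‖α • g₁ + β • g₂‖ := mul_one _
  refine ⟨h12, h21, hmain, ?_⟩
  intro k
  have hg1n : ‖g₁‖ = 1 := by
    have := hmain 1 0
    simpa using this
  have hkg2 : ‖k • g₂‖ = |k| := by
    have := hmain 0 k
    simpa using this
  have h1k : ‖g₁ + k • g₂‖ = 1 + |k| := by
    have := hmain 1 k
    simpa using this
  rw [h1k, hg1n, hkg2]
end

section
/- Let V be an order smooth ∞-normed space and u₁, u₂ ∈ V⁺ \ {0}. Then ‖ ‖u₁‖⁻¹u₁ − ‖u₂‖⁻¹u₂ ‖ ≤ ‖ ‖u₁‖⁻¹u₁ + ‖u₂‖⁻¹u₂ ‖, and u₁ ⊥_∞ u₂ if and only if ‖ ‖u₁‖⁻¹u₁ + ‖u₂‖⁻¹u₂ ‖ = ‖ ‖u₁‖⁻¹u₁ − ‖u₂‖⁻¹u₂ ‖. -/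
private lemma le_eps {a b : ℝ} (h : ∀ ε : ℝ, 0 < ε → a ≤ b + ε) : a ≤ b := by
  by_contra hc
  push_neg at hc
  have := h ((a - b) / 2) (by linarith)
  linarith

/-- Key functional-existence lemma: if `x, y` are in the cone, `‖x‖ = 1` and `‖x + y‖ = 1`,
then there is a norm-one positive functional `f` with `f x = 1`, `f y = 0`. -/
private lemma exists_functional {V : Type*} [NormedAddCommGroup V] [NormedSpace ℝ V] (C : Set V)
    (hCadd : ∀ x ∈ C, ∀ y ∈ C, x + y ∈ C)
    (hCsmul : ∀ x ∈ C, ∀ r : ℝ, 0 ≤ r → r • x ∈ C)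
    (hCgen : ∀ x : V, ∃ y ∈ C, ∃ z ∈ C, x = y - z)
    (hO1 : ∀ u v w : V, v - u ∈ C → w - v ∈ C → ‖v‖ ≤ max ‖u‖ ‖w‖)
    (hO2 : ∀ v : V, ∀ ε : ℝ, 0 < ε → ∃ u₁ ∈ C, ∃ u₂ ∈ C,
      v = u₁ - u₂ ∧ max ‖u₁‖ ‖u₂‖ ≤ ‖v‖ + ε)
    (x y : V) (hx : x ∈ C) (hy : y ∈ C) (hnx : ‖x‖ = 1)
    (hxy : ‖x + y‖ = 1) :
    ∃ f : V →ₗ[ℝ] ℝ, (∀ v, f v ≤ ‖v‖) ∧ f x = 1 ∧ f y = 0 := by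
  set S : V → Set ℝ := fun v => (fun w => ‖w‖) '' {w | w - v ∈ C} with hS
  set P : V → ℝ := fun v => sInf (S v) with hPdef
  have hSne : ∀ v, (S v).Nonempty := by
    intro v
    obtain ⟨p, hp, q, hq, hv⟩ := hCgen v
    exact ⟨‖p‖, p, by rw [Set.mem_setOf_eq, hv, sub_sub_cancel]; exact hq, rfl⟩
  have hSbdd : ∀ v, BddBelow (S v) := by
    intro v
    refine ⟨0, ?_⟩
    rintro r ⟨w, -, rfl⟩
    exact norm_nonneg w
  have hPle : ∀ v w, w - v ∈ C → P v ≤ ‖w‖ := fun v w hw => csInf_le (hSbdd v) ⟨w, hw, rfl⟩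
  have hPlb : ∀ v r, (∀ w, w - v ∈ C → r ≤ ‖w‖) → r ≤ P v := by
    intro v r h
    refine le_csInf (hSne v) ?_
    rintro s ⟨w, hw, rfl⟩
    exact h w hw
  have hP0 : ∀ v, 0 ≤ P v := fun v => hPlb v 0 fun w _ => norm_nonneg w
  have hPnorm : ∀ v, P v ≤ ‖v‖ := by
    intro v
    refine le_eps fun ε hε => ?_
    obtain ⟨p, hp, q, hq, hv, hm⟩ := hO2 v ε hε
    have hpv : p - v ∈ C := by rw [hv, sub_sub_cancel]; exact hq
    exact (hPle v p hpv).trans ((le_max_left _ _).trans hm)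
  have hPadd : ∀ v₁ v₂, P (v₁ + v₂) ≤ P v₁ + P v₂ := by
    intro v₁ v₂
    refine le_eps fun ε hε => ?_
    obtain ⟨r₁, hr₁S, hr₁⟩ := Real.lt_sInf_add_pos (hSne v₁) (half_pos hε)
    obtain ⟨r₂, hr₂S, hr₂⟩ := Real.lt_sInf_add_pos (hSne v₂) (half_pos hε)
    obtain ⟨w₁, hw₁, rfl⟩ := hr₁S
    obtain ⟨w₂, hw₂, rfl⟩ := hr₂S
    have hmem : (w₁ + w₂) - (v₁ + v₂) ∈ C := by
      rw [show (w₁ + w₂) - (v₁ + v₂) = (w₁ - v₁) + (w₂ - v₂) by abel]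
      exact hCadd _ hw₁ _ hw₂
    calc P (v₁ + v₂) ≤ ‖w₁ + w₂‖ := hPle _ _ hmem
      _ ≤ ‖w₁‖ + ‖w₂‖ := norm_add_le _ _
      _ ≤ P v₁ + P v₂ + ε := by
          have h1 : sInf (S v₁) = P v₁ := rfl
          have h2 : sInf (S v₂) = P v₂ := rfl
          rw [h1] at hr₁; rw [h2] at hr₂; linarith
  have hPsmul_le : ∀ c : ℝ, 0 < c → ∀ v, P (c • v) ≤ c * P v := by
    intro c hc v
    have hlow : P (c • v) / c ≤ P v := by
      refine hPlb v _ fun w hw => ?_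
      rw [div_le_iff₀ hc]
      have hmem : c • w - c • v ∈ C := by
        rw [← smul_sub]; exact hCsmul _ hw c hc.le
      have := hPle (c • v) (c • w) hmem
      rwa [norm_smul, Real.norm_eq_abs, abs_of_pos hc, mul_comm] at this
    rwa [div_le_iff₀ hc, mul_comm] at hlow
  have hPsmul : ∀ c : ℝ, 0 < c → ∀ v, P (c • v) = c * P v := by
    intro c hc v
    refine le_antisymm (hPsmul_le c hc v) ?_
    have h := hPsmul_le c⁻¹ (inv_pos.mpr hc) (c • v)
    rw [inv_smul_smul₀ hc.ne'] at h
    have := mul_le_mul_of_nonneg_left h hc.le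
    rwa [← mul_assoc, mul_inv_cancel₀ hc.ne', one_mul] at this
  -- the key lower bound
  have hkey : 1 ≤ P (x - y) := by
    refine hPlb _ 1 fun w hw => ?_
    have h2 : ((2:ℝ) • x) - 0 ∈ C := by
      rw [sub_zero]; exact hCsmul x hx 2 (by norm_num)
    have h3 : (w + (x + y)) - (2:ℝ) • x ∈ C := by
      rw [show (w + (x + y)) - (2:ℝ) • x = w - (x - y) by module]
      exact hw
    have hO := hO1 0 ((2:ℝ) • x) (w + (x + y)) h2 h3
    rw [norm_zero, norm_smul, hnx, max_eq_right (norm_nonneg _),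
      Real.norm_eq_abs] at hO
    have h4 : ‖w + (x + y)‖ ≤ ‖w‖ + 1 := by
      calc ‖w + (x + y)‖ ≤ ‖w‖ + ‖x + y‖ := norm_add_le _ _
        _ = ‖w‖ + 1 := by rw [hxy]
    have habs : |(2:ℝ)| * 1 = 2 := by norm_num
    rw [habs] at hO
    linarith
  have hne0 : x - y ≠ 0 := by
    intro h
    have hxyeq : x = y := sub_eq_zero.mp h
    have : ‖x + y‖ = 2 := by
      rw [← hxyeq, ← two_smul ℝ x, norm_smul, hnx]
      norm_num
    rw [hxy] at this
    norm_num at this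
  -- build the partial linear map on `ℝ ∙ (x - y)`
  have Hc : ∀ c : ℝ, c • (x - y) = 0 → c • (1:ℝ) = 0 := by
    intro c hc
    rcases smul_eq_zero.mp hc with h | h
    · rw [h, zero_smul]
    · exact absurd h hne0
  set f₀ : V →ₗ.[ℝ] ℝ := LinearPMap.mkSpanSingleton' (x - y) (1:ℝ) Hc with hf₀
  have hf : ∀ z : f₀.domain, f₀ z ≤ P z := by
    rintro ⟨z, hz⟩
    have hz' : z ∈ Submodule.span ℝ {x - y} := hz
    rw [Submodule.mem_span_singleton] at hz'
    obtain ⟨c, hcz⟩ := hz'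
    subst hcz
    have happ : f₀ ⟨c • (x - y), hz⟩ = c • (1:ℝ) :=
      LinearPMap.mkSpanSingleton'_apply (x - y) (1:ℝ) Hc c _
    rw [happ, smul_eq_mul, mul_one]
    show c ≤ P (c • (x - y))
    rcases lt_trichotomy c 0 with h | h | h
    · exact h.le.trans (hP0 _)
    · subst h; rw [zero_smul]; exact hP0 0
    · rw [hPsmul c h (x - y)]
      calc c = c * 1 := (mul_one c).symm
        _ ≤ c * P (x - y) := by nlinarith
  obtain ⟨g, hg_eq, hg_le⟩ := exists_extension_of_le_sublinear f₀ P hPsmul hPadd hf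
  have hg1 : g (x - y) = 1 := by
    have hmem : x - y ∈ f₀.domain := by
      show x - y ∈ (LinearPMap.mkSpanSingleton' (x - y) (1:ℝ) Hc).domain
      rw [LinearPMap.domain_mkSpanSingleton]
      exact Submodule.mem_span_singleton_self _
    have := hg_eq ⟨x - y, hmem⟩
    rw [this]
    have : f₀ ⟨x - y, hmem⟩ = (1:ℝ) :=
      LinearPMap.mkSpanSingleton'_apply_self (x - y) (1:ℝ) Hc hmem
    exact this
  have hgnorm : ∀ v, g v ≤ ‖v‖ := fun v => (hg_le v).trans (hPnorm v)
  have hgy : 0 ≤ g y := by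
    have h1 : g (-y) ≤ P (-y) := hg_le _
    have h2 : P (-y) ≤ 0 := by
      have := hPle (-y) 0 (by rw [zero_sub, neg_neg]; exact hy)
      rwa [norm_zero] at this
    rw [map_neg] at h1
    linarith
  have hgx_le : g x ≤ 1 := by
    have := hgnorm x
    rwa [hnx] at this
  have hsub : g x - g y = 1 := by rw [← map_sub]; exact hg1
  exact ⟨g, hgnorm, by linarith, by linarith⟩

theorem stmt12 {V : Type*} [NormedAddCommGroup V] [NormedSpace ℝ V] (C : Set V)
    -- `C` is a norm-closed, proper, generating cone:
    (hCadd : ∀ x ∈ C, ∀ y ∈ C, x + y ∈ C)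
    (hCsmul : ∀ x ∈ C, ∀ r : ℝ, 0 ≤ r → r • x ∈ C)
    (hCproper : ∀ x, x ∈ C → -x ∈ C → x = 0)
    (hCgen : ∀ x : V, ∃ y ∈ C, ∃ z ∈ C, x = y - z)
    (hCclosed : IsClosed C)
    -- (O.∞.1):
    (hO1 : ∀ u v w : V, v - u ∈ C → w - v ∈ C → ‖v‖ ≤ max ‖u‖ ‖w‖)
    -- (O.∞.2):
    (hO2 : ∀ v : V, ∀ ε : ℝ, 0 < ε → ∃ u₁ ∈ C, ∃ u₂ ∈ C,
      v = u₁ - u₂ ∧ max ‖u₁‖ ‖u₂‖ ≤ ‖v‖ + ε)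
    (u₁ u₂ : V) (hu₁ : u₁ ∈ C) (hu₂ : u₂ ∈ C) (hn₁ : u₁ ≠ 0) (hn₂ : u₂ ≠ 0) :
    ‖‖u₁‖⁻¹ • u₁ - ‖u₂‖⁻¹ • u₂‖ ≤ ‖‖u₁‖⁻¹ • u₁ + ‖u₂‖⁻¹ • u₂‖ ∧
      (PerpInf u₁ u₂ ↔
        ‖‖u₁‖⁻¹ • u₁ + ‖u₂‖⁻¹ • u₂‖ = ‖‖u₁‖⁻¹ • u₁ - ‖u₂‖⁻¹ • u₂‖) := by
  have ha : (0:ℝ) < ‖u₁‖ := norm_pos_iff.mpr hn₁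
  have hb : (0:ℝ) < ‖u₂‖ := norm_pos_iff.mpr hn₂
  set a : ℝ := ‖u₁‖ with hadef
  set b : ℝ := ‖u₂‖ with hbdef
  set x : V := a⁻¹ • u₁ with hxdef
  set y : V := b⁻¹ • u₂ with hydef
  have hx : x ∈ C := hCsmul u₁ hu₁ _ (inv_nonneg.mpr ha.le)
  have hy : y ∈ C := hCsmul u₂ hu₂ _ (inv_nonneg.mpr hb.le)
  have hnx : ‖x‖ = 1 := by
    rw [hxdef, norm_smul, Real.norm_eq_abs, abs_of_pos (inv_pos.mpr ha), ← hadef,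
      inv_mul_cancel₀ ha.ne']
  have hny : ‖y‖ = 1 := by
    rw [hydef, norm_smul, Real.norm_eq_abs, abs_of_pos (inv_pos.mpr hb), ← hbdef,
      inv_mul_cancel₀ hb.ne']
  have hu1x : u₁ = a • x := by
    rw [hxdef, smul_smul, mul_inv_cancel₀ ha.ne', one_smul]
  have hu2y : u₂ = b • y := by
    rw [hydef, smul_smul, mul_inv_cancel₀ hb.ne', one_smul]
  clear_value x y
  have hxpy_ge : 1 ≤ ‖x + y‖ := by
    have h1 : x - 0 ∈ C := by rw [sub_zero]; exact hx
    have h2 : (x + y) - x ∈ C := by rw [add_sub_cancel_left]; exact hy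
    have := hO1 0 x (x + y) h1 h2
    rwa [norm_zero, hnx, max_eq_right (norm_nonneg _)] at this
  have hxmy_le : ‖x - y‖ ≤ 1 := by
    have h1 : (x - y) - (-y) ∈ C := by rw [sub_neg_eq_add, sub_add_cancel]; exact hx
    have h2 : x - (x - y) ∈ C := by rw [sub_sub_cancel]; exact hy
    have := hO1 (-y) (x - y) x h1 h2
    rwa [norm_neg, hny, hnx, max_self] at this
  have part1 : ‖x - y‖ ≤ ‖x + y‖ := by
    have h1 : (x - y) - (-(x + y)) ∈ C := by
      rw [show (x - y) - (-(x + y)) = (2:ℝ) • x by module]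
      exact hCsmul x hx 2 (by norm_num)
    have h2 : (x + y) - (x - y) ∈ C := by
      rw [show (x + y) - (x - y) = (2:ℝ) • y by module]
      exact hCsmul y hy 2 (by norm_num)
    have := hO1 _ _ _ h1 h2
    rwa [norm_neg, max_self] at this
  refine ⟨part1, ?_, ?_⟩
  · -- PerpInf → equality of norms
    intro hP
    have habinv : |a * b⁻¹| = a * b⁻¹ := abs_of_pos (by positivity)
    have e1 : ‖x + y‖ = 1 := by
      have hk := hP (a * b⁻¹)
      have h2 : (a * b⁻¹) • u₂ = a • y := by rw [hydef, smul_smul]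
      have h3 : u₁ + (a * b⁻¹) • u₂ = a • (x + y) := by rw [smul_add, ← hu1x, h2]
      rw [h3, h2, norm_smul, norm_smul, hny, Real.norm_eq_abs, abs_of_pos ha,
        mul_one, ← hadef, max_self] at hk
      exact mul_left_cancel₀ ha.ne' (hk.trans (mul_one a).symm)
    have e2 : ‖x - y‖ = 1 := by
      have hk := hP (-(a * b⁻¹))
      have h2 : (-(a * b⁻¹)) • u₂ = -(a • y) := by
        rw [hydef, smul_smul, neg_smul]
      have h3 : u₁ + (-(a * b⁻¹)) • u₂ = a • (x - y) := by
        rw [smul_sub, ← hu1x, h2]; abel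
      rw [h3, h2, norm_neg, norm_smul, norm_smul, hny, Real.norm_eq_abs, abs_of_pos ha,
        mul_one, ← hadef, max_self] at hk
      exact mul_left_cancel₀ ha.ne' (hk.trans (mul_one a).symm)
    rw [e1, e2]
  · -- equality of norms → PerpInf
    intro H
    have e1 : ‖x + y‖ = 1 := le_antisymm (H.trans_le hxmy_le) hxpy_ge
    obtain ⟨f, hf_norm, hfx, hfy⟩ :=
      exists_functional C hCadd hCsmul hCgen hO1 hO2 x y hx hy hnx e1
    obtain ⟨g, hg_norm, hgy, hgx⟩ :=
      exists_functional C hCadd hCsmul hCgen hO1 hO2 y x hy hx hny (by rwa [add_comm])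
    intro k
    have hc : u₁ + k • u₂ = a • x + (k * b) • y := by rw [hu1x, hu2y]; module
    have hnorm2 : ‖k • u₂‖ = |k * b| := by
      rw [norm_smul, Real.norm_eq_abs, abs_mul, abs_of_pos hb, ← hbdef]
    set c : ℝ := k * b with hcdef
    have hMa : a ≤ max a |c| := le_max_left _ _
    have hMc : |c| ≤ max a |c| := le_max_right _ _
    have hM0 : 0 ≤ max a |c| := ha.le.trans hMa
    set M : ℝ := max a |c| with hMdef
    have hub : ‖a • x + c • y‖ ≤ M := by
      have h1 : (a • x + c • y) - (-(M • (x + y))) ∈ C := by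
        rw [show (a • x + c • y) - (-(M • (x + y))) = (M + a) • x + (M + c) • y by module]
        refine hCadd _ (hCsmul x hx _ (by linarith)) _ (hCsmul y hy _ ?_)
        have := neg_abs_le c
        linarith
      have h2 : (M • (x + y)) - (a • x + c • y) ∈ C := by
        rw [show (M • (x + y)) - (a • x + c • y) = (M - a) • x + (M - c) • y by module]
        refine hCadd _ (hCsmul x hx _ (by linarith)) _ (hCsmul y hy _ ?_)
        have := le_abs_self c
        linarith
      have := hO1 _ _ _ h1 h2
      rwa [norm_neg, max_self, norm_smul, Real.norm_eq_abs, abs_of_nonneg hM0, e1,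
        mul_one] at this
    have hfv : f (a • x + c • y) = a := by
      rw [map_add, map_smul, map_smul, hfx, hfy, smul_eq_mul, smul_eq_mul]
      ring
    have hgv : g (a • x + c • y) = c := by
      rw [map_add, map_smul, map_smul, hgx, hgy, smul_eq_mul, smul_eq_mul]
      ring
    have hlb1 : a ≤ ‖a • x + c • y‖ := by
      have := hf_norm (a • x + c • y)
      linarith [hfv ▸ this]
    have hlb2 : |c| ≤ ‖a • x + c • y‖ := by
      have h1 := hg_norm (a • x + c • y)
      have h2 := hg_norm (-(a • x + c • y))
      rw [map_neg, norm_neg] at h2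
      rw [hgv] at h1 h2
      rcases abs_cases c with ⟨h, _⟩ | ⟨h, _⟩ <;> rw [h] <;> linarith
    rw [hc, hnorm2]
    exact le_antisymm hub (max_le hlb1 hlb2)
end

section
/- Let V be an order smooth ∞-normed space and u₁, u₂ ∈ V⁺ with u₁ ⊥_∞ u₂. If u₁ − u₂ ∈ V⁺, then u₂ = 0. -/
theorem stmt13 {V : Type*} [NormedAddCommGroup V] [NormedSpace ℝ V] (C : Set V)
    -- `C` is a norm-closed, proper, generating cone:
    (hCadd : ∀ x ∈ C, ∀ y ∈ C, x + y ∈ C)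
    (hCsmul : ∀ x ∈ C, ∀ r : ℝ, 0 ≤ r → r • x ∈ C)
    (hCproper : ∀ x, x ∈ C → -x ∈ C → x = 0)
    (hCgen : ∀ x : V, ∃ y ∈ C, ∃ z ∈ C, x = y - z)
    (hCclosed : IsClosed C)
    -- (O.∞.1):
    (hO1 : ∀ u v w : V, v - u ∈ C → w - v ∈ C → ‖v‖ ≤ max ‖u‖ ‖w‖)
    -- (O.∞.2):
    (hO2 : ∀ v : V, ∀ ε : ℝ, 0 < ε → ∃ u₁ ∈ C, ∃ u₂ ∈ C,
      v = u₁ - u₂ ∧ max ‖u₁‖ ‖u₂‖ ≤ ‖v‖ + ε)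
    (u₁ u₂ : V) (hu₁ : u₁ ∈ C) (hu₂ : u₂ ∈ C)
    (hperp : PerpInf u₁ u₂) (hdiff : u₁ - u₂ ∈ C) :
    u₂ = 0 := by
  by_contra h
  have hn : 0 < ‖u₂‖ := norm_pos_iff.mpr h
  set k : ℝ := ‖u₁‖ / ‖u₂‖ with hk
  have hk0 : 0 ≤ k := div_nonneg (norm_nonneg _) (norm_nonneg _)
  have hk1 : 0 ≤ 1 + k := by linarith
  have h1 : ((1 + k) • u₂) - 0 ∈ C := by
    simpa using hCsmul u₂ hu₂ (1 + k) hk1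
  have h2 : (u₁ + k • u₂) - (1 + k) • u₂ ∈ C := by
    have : (u₁ + k • u₂) - (1 + k) • u₂ = u₁ - u₂ := by
      rw [add_smul, one_smul]; abel
    rw [this]; exact hdiff
  have hle := hO1 0 ((1 + k) • u₂) (u₁ + k • u₂) h1 h2
  have hkn : ‖k • u₂‖ = ‖u₁‖ := by
    rw [norm_smul, Real.norm_of_nonneg hk0, hk, div_mul_cancel₀ _ (ne_of_gt hn)]
  have hperpk := hperp k
  rw [hkn, max_self] at hperpk
  rw [norm_zero, hperpk, norm_smul, Real.norm_of_nonneg hk1] at hle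
  have : (1 + k) * ‖u₂‖ ≤ ‖u₁‖ := le_trans hle (max_le (norm_nonneg _) le_rfl)
  have hku : k * ‖u₂‖ = ‖u₁‖ := by
    rw [hk, div_mul_cancel₀ _ (ne_of_gt hn)]
  nlinarith
end

section
/- Let (V, e) be an order unit space and u₁, u₂ ∈ V⁺ \ {0}. Then u₁ ⊥_∞ u₂ if and only if ‖u₁‖⁻¹u₁ + ‖u₂‖⁻¹u₂ ≤ e. -/
theorem stmt14 {V : Type*} [NormedAddCommGroup V] [NormedSpace ℝ V] (C : Set V) (e : V)
    -- `C` is a norm-closed, proper, generating cone: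
    (hCadd : ∀ x ∈ C, ∀ y ∈ C, x + y ∈ C)
    (hCsmul : ∀ x ∈ C, ∀ r : ℝ, 0 ≤ r → r • x ∈ C)
    (hCproper : ∀ x, x ∈ C → -x ∈ C → x = 0)
    (hCgen : ∀ x : V, ∃ y ∈ C, ∃ z ∈ C, x = y - z)
    (hCclosed : IsClosed C)
    -- `e` is an Archimedean order unit:
    (he : e ∈ C)
    (hunit : ∀ v : V, ∃ k : ℝ, 0 < k ∧ k • e - v ∈ C ∧ k • e + v ∈ C)
    (harch : ∀ v : V, (∀ k : ℝ, 0 < k → k • e + v ∈ C) → v ∈ C)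
    -- the norm is the order unit norm determined by `e`:
    (hnorm : ∀ v : V, ‖v‖ = sInf {k : ℝ | 0 < k ∧ k • e - v ∈ C ∧ k • e + v ∈ C})
    (u₁ u₂ : V) (hu₁ : u₁ ∈ C) (hu₂ : u₂ ∈ C) (hn₁ : u₁ ≠ 0) (hn₂ : u₂ ≠ 0) :
    PerpInf u₁ u₂ ↔ e - (‖u₁‖⁻¹ • u₁ + ‖u₂‖⁻¹ • u₂) ∈ C := by
  have hn₁' : (0:ℝ) < ‖u₁‖ := norm_pos_iff.mpr hn₁
  have hn₂' : (0:ℝ) < ‖u₂‖ := norm_pos_iff.mpr hn₂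
  have hne₁ : ‖u₁‖ ≠ 0 := ne_of_gt hn₁'
  have hne₂ : ‖u₂‖ ≠ 0 := ne_of_gt hn₂'
  have hSne : ∀ v : V, {k : ℝ | 0 < k ∧ k • e - v ∈ C ∧ k • e + v ∈ C}.Nonempty := by
    intro v; obtain ⟨k, hk, h1, h2⟩ := hunit v; exact ⟨k, hk, h1, h2⟩
  have hSbdd : ∀ v : V, BddBelow {k : ℝ | 0 < k ∧ k • e - v ∈ C ∧ k • e + v ∈ C} :=
    fun v => ⟨0, fun x hx => hx.1.le⟩
  -- if t • e ± v ∈ C with t ≥ 0 then ‖v‖ ≤ t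
  have normle : ∀ (v : V) (t : ℝ), 0 ≤ t → t • e - v ∈ C → t • e + v ∈ C → ‖v‖ ≤ t := by
    intro v t ht h1 h2
    rw [hnorm v]
    refine le_of_forall_pos_le_add (fun ε hε => ?_)
    refine csInf_le (hSbdd v) ⟨by linarith, ?_, ?_⟩
    · have heq : (t + ε) • e - v = ε • e + (t • e - v) := by module
      rw [heq]; exact hCadd _ (hCsmul e he ε hε.le) _ h1
    · have heq : (t + ε) • e + v = ε • e + (t • e + v) := by module
      rw [heq]; exact hCadd _ (hCsmul e he ε hε.le) _ h2
  -- the infimum is attained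
  have attain : ∀ v : V, ‖v‖ • e - v ∈ C ∧ ‖v‖ • e + v ∈ C := by
    intro v
    constructor
    · apply harch
      intro t ht
      have hlt : sInf {k : ℝ | 0 < k ∧ k • e - v ∈ C ∧ k • e + v ∈ C} < ‖v‖ + t := by
        rw [← hnorm]; linarith
      obtain ⟨s, hs, hslt⟩ := exists_lt_of_csInf_lt (hSne v) hlt
      have heq : t • e + (‖v‖ • e - v) = (‖v‖ + t - s) • e + (s • e - v) := by module
      rw [heq]; exact hCadd _ (hCsmul e he _ (by linarith)) _ hs.2.1
    · apply harch
      intro t ht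
      have hlt : sInf {k : ℝ | 0 < k ∧ k • e - v ∈ C ∧ k • e + v ∈ C} < ‖v‖ + t := by
        rw [← hnorm]; linarith
      obtain ⟨s, hs, hslt⟩ := exists_lt_of_csInf_lt (hSne v) hlt
      have heq : t • e + (‖v‖ • e + v) = (‖v‖ + t - s) • e + (s • e + v) := by module
      rw [heq]; exact hCadd _ (hCsmul e he _ (by linarith)) _ hs.2.2
  -- if d • e - c • u ∈ C with u ∈ C, c > 0, d ≥ 0, then c * ‖u‖ ≤ d
  have L4 : ∀ u : V, u ∈ C → ∀ c d : ℝ, 0 < c → 0 ≤ d → d • e - c • u ∈ C → c * ‖u‖ ≤ d := by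
    intro u hu c d hc hd h1
    have h2 : d • e + c • u ∈ C := hCadd _ (hCsmul e he d hd) _ (hCsmul u hu c hc.le)
    have := normle (c • u) d hd h1 h2
    rwa [norm_smul, Real.norm_eq_abs, abs_of_pos hc] at this
  constructor
  · -- forward direction
    intro h
    have hx : ‖u₁ + (‖u₁‖ / ‖u₂‖) • u₂‖ = ‖u₁‖ := by
      rw [h, norm_smul, Real.norm_eq_abs, abs_of_pos (div_pos hn₁' hn₂'),
        div_mul_cancel₀ _ hne₂, max_self]
    have hm := (attain (u₁ + (‖u₁‖ / ‖u₂‖) • u₂)).1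
    rw [hx] at hm
    have hmem := hCsmul _ hm ‖u₁‖⁻¹ (by positivity)
    have heq : e - (‖u₁‖⁻¹ • u₁ + ‖u₂‖⁻¹ • u₂)
        = ‖u₁‖⁻¹ • (‖u₁‖ • e - (u₁ + (‖u₁‖ / ‖u₂‖) • u₂)) := by
      match_scalars <;> field_simp
    rw [heq]; exact hmem
  · -- backward direction
    intro h k
    rw [norm_smul, Real.norm_eq_abs]
    set M := max ‖u₁‖ (|k| * ‖u₂‖) with hMdef
    have hM1 : ‖u₁‖ ≤ M := le_max_left _ _
    have hM2 : |k| * ‖u₂‖ ≤ M := le_max_right _ _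
    have hM0 : (0:ℝ) ≤ M := le_trans hn₁'.le hM1
    have ht := attain (u₁ + k • u₂)
    have ht0 : (0:ℝ) ≤ ‖u₁ + k • u₂‖ := norm_nonneg _
    refine le_antisymm ?_ (max_le ?_ ?_)
    · -- ‖u₁ + k • u₂‖ ≤ M
      rcases le_or_gt 0 k with hk | hk
      · have habs : |k| = k := abs_of_nonneg hk
        refine normle _ _ hM0 ?_ ?_
        · have heq : M • e - (u₁ + k • u₂)
              = M • (e - (‖u₁‖⁻¹ • u₁ + ‖u₂‖⁻¹ • u₂))
                + ((M - ‖u₁‖) * ‖u₁‖⁻¹) • u₁ + ((M - k * ‖u₂‖) * ‖u₂‖⁻¹) • u₂ := by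
            match_scalars <;> field_simp <;> ring
          rw [heq]
          refine hCadd _ (hCadd _ (hCsmul _ h M hM0) _ (hCsmul u₁ hu₁ _ ?_)) _
            (hCsmul u₂ hu₂ _ ?_)
          · exact mul_nonneg (by linarith) (by positivity)
          · exact mul_nonneg (by rw [habs] at hM2; linarith) (by positivity)
        · have heq : M • e + (u₁ + k • u₂) = (M • e + u₁) + k • u₂ := by module
          rw [heq]
          exact hCadd _ (hCadd _ (hCsmul e he M hM0) _ hu₁) _ (hCsmul u₂ hu₂ k hk)
      · have habs : |k| = -k := abs_of_neg hk
        refine normle _ _ hM0 ?_ ?_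
        · have heq : M • e - (u₁ + k • u₂)
              = ((M - ‖u₁‖) • e + (‖u₁‖ • e - u₁)) + (-k) • u₂ := by module
          rw [heq]
          exact hCadd _ (hCadd _ (hCsmul e he _ (by linarith)) _ (attain u₁).1) _
            (hCsmul u₂ hu₂ (-k) (by linarith))
        · have heq : M • e + (u₁ + k • u₂)
              = ((M - (-k) * ‖u₂‖) • e + (-k) • (‖u₂‖ • e - u₂)) + u₁ := by module
          rw [heq]
          refine hCadd _ (hCadd _ (hCsmul e he _ ?_) _ (hCsmul _ ((attain u₂).1) (-k)
            (by linarith))) _ hu₁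
          rw [habs] at hM2; linarith
    · -- ‖u₁‖ ≤ ‖u₁ + k • u₂‖
      rcases le_or_gt 0 k with hk | hk
      · have hA : ‖u₁ + k • u₂‖ • e - (1:ℝ) • u₁ ∈ C := by
          have heq : ‖u₁ + k • u₂‖ • e - (1:ℝ) • u₁
              = (‖u₁ + k • u₂‖ • e - (u₁ + k • u₂)) + k • u₂ := by module
          rw [heq]; exact hCadd _ ht.1 _ (hCsmul u₂ hu₂ k hk)
        have := L4 u₁ hu₁ 1 _ one_pos ht0 hA
        linarith
      · have hc : (0:ℝ) < 1 + (-k) * ‖u₂‖ * ‖u₁‖⁻¹ := by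
          have hk' : (0:ℝ) < -k := by linarith
          positivity
        have hd : (0:ℝ) ≤ ‖u₁ + k • u₂‖ + (-k) * ‖u₂‖ := by
          have : (0:ℝ) ≤ (-k) * ‖u₂‖ := mul_nonneg (by linarith) hn₂'.le
          linarith
        have hA : (‖u₁ + k • u₂‖ + (-k) * ‖u₂‖) • e
            - (1 + (-k) * ‖u₂‖ * ‖u₁‖⁻¹) • u₁ ∈ C := by
          have heq : (‖u₁ + k • u₂‖ + (-k) * ‖u₂‖) • e - (1 + (-k) * ‖u₂‖ * ‖u₁‖⁻¹) • u₁
              = (‖u₁ + k • u₂‖ • e - (u₁ + k • u₂))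
                + ((-k) * ‖u₂‖) • (e - (‖u₁‖⁻¹ • u₁ + ‖u₂‖⁻¹ • u₂)) := by
            match_scalars <;> field_simp <;> ring
          rw [heq]
          exact hCadd _ ht.1 _ (hCsmul _ h _ (mul_nonneg (by linarith) hn₂'.le))
        have hL := L4 u₁ hu₁ _ _ hc hd hA
        have hexp : (1 + (-k) * ‖u₂‖ * ‖u₁‖⁻¹) * ‖u₁‖ = ‖u₁‖ + (-k) * ‖u₂‖ := by
          field_simp
        rw [hexp] at hL
        linarith
    · -- |k| * ‖u₂‖ ≤ ‖u₁ + k • u₂‖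
      rcases lt_trichotomy k 0 with hk | hk | hk
      · have habs : |k| = -k := abs_of_neg hk
        have hc : (0:ℝ) < (-k) + ‖u₁‖ * ‖u₂‖⁻¹ := by
          have hk' : (0:ℝ) < -k := by linarith
          positivity
        have hB : (‖u₁ + k • u₂‖ + ‖u₁‖) • e - ((-k) + ‖u₁‖ * ‖u₂‖⁻¹) • u₂ ∈ C := by
          have heq : (‖u₁ + k • u₂‖ + ‖u₁‖) • e - ((-k) + ‖u₁‖ * ‖u₂‖⁻¹) • u₂
              = (‖u₁ + k • u₂‖ • e + (u₁ + k • u₂))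
                + ‖u₁‖ • (e - (‖u₁‖⁻¹ • u₁ + ‖u₂‖⁻¹ • u₂)) := by
            match_scalars <;> field_simp <;> ring
          rw [heq]
          exact hCadd _ ht.2 _ (hCsmul _ h ‖u₁‖ hn₁'.le)
        have hL := L4 u₂ hu₂ _ _ hc (by linarith) hB
        have hexp : ((-k) + ‖u₁‖ * ‖u₂‖⁻¹) * ‖u₂‖ = (-k) * ‖u₂‖ + ‖u₁‖ := by
          field_simp
        rw [hexp] at hL
        rw [habs]; linarith
      · subst hk; simp [ht0]
      · have habs : |k| = k := abs_of_pos hk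
        have hB : ‖u₁ + k • u₂‖ • e - k • u₂ ∈ C := by
          have heq : ‖u₁ + k • u₂‖ • e - k • u₂
              = (‖u₁ + k • u₂‖ • e - (u₁ + k • u₂)) + u₁ := by module
          rw [heq]; exact hCadd _ ht.1 _ hu₁
        have := L4 u₂ hu₂ k _ hk ht0 hB
        rw [habs]; linarith
end

section
/- Let (V, e) be an order unit space and u ∈ V⁺ \ {0}. Then there exists a nonzero v ∈ V⁺ with u ⊥_∞ v if and only if there exists a positive functional f ∈ V'⁺ with ‖f‖ = 1 and f(u) = 0. -/
set_option maxHeartbeats 1000000 in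
theorem stmt15 {V : Type*} [NormedAddCommGroup V] [NormedSpace ℝ V] (C : Set V) (e : V)
    -- `C` is a norm-closed, proper, generating cone:
    (hCadd : ∀ x ∈ C, ∀ y ∈ C, x + y ∈ C)
    (hCsmul : ∀ x ∈ C, ∀ r : ℝ, 0 ≤ r → r • x ∈ C)
    (hCproper : ∀ x, x ∈ C → -x ∈ C → x = 0)
    (hCgen : ∀ x : V, ∃ y ∈ C, ∃ z ∈ C, x = y - z)
    (hCclosed : IsClosed C)
    -- `e` is an Archimedean order unit:
    (he : e ∈ C)
    (hunit : ∀ v : V, ∃ k : ℝ, 0 < k ∧ k • e - v ∈ C ∧ k • e + v ∈ C)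
    (harch : ∀ v : V, (∀ k : ℝ, 0 < k → k • e + v ∈ C) → v ∈ C)
    -- the norm is the order unit norm determined by `e`:
    (hnorm : ∀ v : V, ‖v‖ = sInf {k : ℝ | 0 < k ∧ k • e - v ∈ C ∧ k • e + v ∈ C})
    (u : V) (hu : u ∈ C) (hn : u ≠ 0) :
    (∃ v ∈ C, v ≠ 0 ∧ PerpInf u v) ↔
      ∃ f : V →L[ℝ] ℝ, (∀ x ∈ C, 0 ≤ f x) ∧ ‖f‖ = 1 ∧ f u = 0 := by
  classical
  have hzero : (0:V) ∈ C := by simpa using hCsmul e he 0 le_rfl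
  have heq0 : e ≠ 0 := by
    intro h
    obtain ⟨k, hk, h1, h2⟩ := hunit u
    rw [h, smul_zero] at h1 h2
    exact hn (hCproper u (by simpa using h2) (by simpa using h1))
  have hSne : ∀ v : V, {k : ℝ | 0 < k ∧ k • e - v ∈ C ∧ k • e + v ∈ C}.Nonempty := by
    intro v
    obtain ⟨k, hk, h1, h2⟩ := hunit v
    exact ⟨k, hk, h1, h2⟩
  have hSbdd : ∀ v : V, BddBelow {k : ℝ | 0 < k ∧ k • e - v ∈ C ∧ k • e + v ∈ C} :=
    fun v => ⟨0, fun k hk => hk.1.le⟩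
  have hray : ∀ (v : V) (k : ℝ), ‖v‖ < k → k • e - v ∈ C ∧ k • e + v ∈ C := by
    intro v k hk
    have h1 : sInf {k : ℝ | 0 < k ∧ k • e - v ∈ C ∧ k • e + v ∈ C} < k := by
      rw [← hnorm v]; exact hk
    obtain ⟨s, hs, hsk⟩ := exists_lt_of_csInf_lt (hSne v) h1
    have hse : (k - s) • e ∈ C := hCsmul e he _ (by linarith)
    constructor
    · have hid : k • e - v = (k - s) • e + (s • e - v) := by module
      rw [hid]; exact hCadd _ hse _ hs.2.1
    · have hid : k • e + v = (k - s) • e + (s • e + v) := by module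
      rw [hid]; exact hCadd _ hse _ hs.2.2
  have hA : ∀ v : V, ‖v‖ • e - v ∈ C ∧ ‖v‖ • e + v ∈ C := by
    intro v
    constructor
    · apply harch
      intro k hk
      have hid : k • e + (‖v‖ • e - v) = (k + ‖v‖) • e - v := by module
      rw [hid]; exact (hray v _ (by linarith)).1
    · apply harch
      intro k hk
      have hid : k • e + (‖v‖ • e + v) = (k + ‖v‖) • e + v := by module
      rw [hid]; exact (hray v _ (by linarith)).2
  have hB : ∀ (v : V) (a : ℝ), 0 ≤ a → a • e - v ∈ C → a • e + v ∈ C → ‖v‖ ≤ a := by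
    intro v a ha h1 h2
    rcases eq_or_lt_of_le ha with h | h
    · have hv : v = 0 := hCproper v (by simpa [← h] using h2) (by simpa [← h] using h1)
      simp [hv, ha]
    · rw [hnorm]; exact csInf_le (hSbdd v) ⟨h, h1, h2⟩
  have he1 : ‖e‖ = 1 := by
    have hle : ‖e‖ ≤ 1 := by
      apply hB e 1 one_pos.le
      · simpa using hzero
      · simpa using hCadd e he e he
    rcases lt_or_eq_of_le hle with h | h
    · exfalso
      have h1 : (1 - ‖e‖) • e ∈ C := hCsmul e he _ (by linarith)
      have h2 : -((1 - ‖e‖) • e) ∈ C := by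
        have hid : -((1 - ‖e‖) • e) = ‖e‖ • e - e + 0 := by module
        rw [hid, add_zero]; exact (hA e).1
      have h0 := hCproper _ h1 h2
      rcases smul_eq_zero.mp h0 with h' | h'
      · linarith
      · exact heq0 h'
    · exact h
  have hM : 0 < ‖u‖ := norm_pos_iff.mpr hn
  constructor
  · rintro ⟨v, hv, hv0, hperp⟩
    have hN : 0 < ‖v‖ := norm_pos_iff.mpr hv0
    -- u cannot dominate a positive multiple of e
    have hNoUnit : ∀ ε : ℝ, 0 < ε → u - ε • e ∉ C := by
      intro ε hε hcon
      set k := ‖u‖ / ‖v‖ with hk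
      have hkpos : 0 < k := div_pos hM hN
      have hkv : ‖k • v‖ = ‖u‖ := by
        rw [norm_smul, Real.norm_eq_abs, abs_of_pos hkpos, hk, div_mul_cancel₀ _ hN.ne']
      have hperpk := hperp k
      rw [hkv, max_self] at hperpk
      have h1 : ‖u‖ • e - (u + k • v) ∈ C := by
        have := (hA (u + k • v)).1
        rwa [hperpk] at this
      have h2 : (‖u‖ - ε) • e - k • v ∈ C := by
        have hid : (‖u‖ - ε) • e - k • v = (‖u‖ • e - (u + k • v)) + (u - ε • e) := by module
        rw [hid]; exact hCadd _ h1 _ hcon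
      have hεM : ε ≤ ‖u‖ := by
        by_contra hh
        push_neg at hh
        have ha' : (ε - ‖u‖) • e ∈ C := hCsmul e he _ (by linarith)
        have hb' : (‖u‖ - ε) • e ∈ C := by
          have hid : (‖u‖ - ε) • e = ((‖u‖ - ε) • e - k • v) + k • v := by module
          rw [hid]; exact hCadd _ h2 _ (hCsmul v hv k hkpos.le)
        have h0 := hCproper _ hb' (by
          rw [show -((‖u‖ - ε) • e) = (ε - ‖u‖) • e by module]; exact ha')
        rcases smul_eq_zero.mp h0 with h' | h'
        · linarith
        · exact heq0 h'
      have hle : ‖k • v‖ ≤ ‖u‖ - ε :=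
        hB _ _ (by linarith) h2
          (hCadd _ (hCsmul e he _ (by linarith)) _ (hCsmul v hv k hkpos.le))
      rw [hkv] at hle; linarith
    -- the line e + t•u stays outside the open unit ball
    have hLine : ∀ t : ℝ, 1 ≤ ‖e + t • u‖ := by
      intro t
      by_contra hh
      push_neg at hh
      rcases le_or_gt 0 t with ht | ht
      · have h1 : ‖e + t • u‖ • e - (e + t • u) ∈ C := (hA _).1
        have h2 : (1 - ‖e + t • u‖) • e ∈ C := hCsmul e he _ (by linarith)
        have h3 : -((1 - ‖e + t • u‖) • e) ∈ C := by
          have hid : -((1 - ‖e + t • u‖) • e)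
              = (‖e + t • u‖ • e - (e + t • u)) + t • u := by module
          rw [hid]; exact hCadd _ h1 _ (hCsmul u hu t ht)
        have h0 := hCproper _ h2 h3
        rcases smul_eq_zero.mp h0 with h' | h'
        · linarith
        · exact heq0 h'
      · have h1 : ‖e + t • u‖ • e - (e + t • u) ∈ C := (hA _).1
        have ht0 : -t ≠ 0 := by linarith
        have h3 : (-t)⁻¹ • (‖e + t • u‖ • e - (e + t • u)) ∈ C :=
          hCsmul _ h1 _ (inv_nonneg.mpr (by linarith))
        have h4 : u - ((1 - ‖e + t • u‖) / (-t)) • e ∈ C := by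
          have hid : u - ((1 - ‖e + t • u‖) / (-t)) • e
              = (-t)⁻¹ • (‖e + t • u‖ • e - (e + t • u)) := by
            match_scalars <;> field_simp [show t ≠ 0 by linarith] <;> ring_nf
          rw [hid]; exact h3
        exact hNoUnit _ (div_pos (by linarith) (by linarith)) h4
    -- separate the line from the open unit ball
    have hconv : Convex ℝ {x : V | ∃ t : ℝ, x = e + t • u} := by
      rintro x ⟨t₁, rfl⟩ y ⟨t₂, rfl⟩ a b ha hb hab
      refine ⟨a * t₁ + b * t₂, ?_⟩
      have hid : a • (e + t₁ • u) + b • (e + t₂ • u)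
          = (a + b) • e + (a * t₁ + b * t₂) • u := by module
      rw [hid, hab, one_smul]
    have hdisj : Disjoint (Metric.ball (0:V) 1) {x : V | ∃ t : ℝ, x = e + t • u} := by
      rw [Set.disjoint_left]
      rintro x hx ⟨t, rfl⟩
      rw [Metric.mem_ball, dist_zero_right] at hx
      exact absurd hx (not_lt.mpr (hLine t))
    obtain ⟨f, c, hfc1, hfc2⟩ :=
      geometric_hahn_banach_open (convex_ball (0:V) 1) Metric.isOpen_ball hconv hdisj
    have hc0 : 0 < c := by
      have := hfc1 0 (by simp)
      simpa using this
    have hkey : ∀ t : ℝ, c ≤ f e + t * f u := by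
      intro t
      have := hfc2 (e + t • u) ⟨t, rfl⟩
      simpa [map_add, map_smul, smul_eq_mul] using this
    have hfu : f u = 0 := by
      by_contra h
      have := hkey ((c - 1 - f e) / f u)
      rw [div_mul_cancel₀ _ h] at this
      linarith
    have hfe : c ≤ f e := by simpa using hkey 0
    have hfnorm : ‖f‖ ≤ c := by
      apply ContinuousLinearMap.opNorm_le_bound _ hc0.le
      intro x
      by_contra hcon
      push_neg at hcon
      set t := (‖x‖ + ‖f x‖ / c) / 2 with ht
      have hxt : ‖x‖ < t := by
        have : ‖x‖ < ‖f x‖ / c := (lt_div_iff₀ hc0).mpr (by linarith [hcon])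
        rw [ht]; linarith
      have htpos : 0 < t := lt_of_le_of_lt (norm_nonneg x) hxt
      have h1 : ‖t⁻¹ • x‖ < 1 := by
        rw [norm_smul, Real.norm_eq_abs, abs_of_pos (by positivity)]
        rw [inv_mul_lt_iff₀ htpos, mul_one]; exact hxt
      have h2 := hfc1 (t⁻¹ • x) (by simpa [Metric.mem_ball, dist_zero_right] using h1)
      have h3 := hfc1 (-(t⁻¹ • x)) (by
        simpa [Metric.mem_ball, dist_zero_right] using h1)
      rw [map_smul, smul_eq_mul] at h2
      rw [map_neg, map_smul, smul_eq_mul] at h3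
      have h2' : f x < t * c := by
        have := mul_lt_mul_of_pos_left h2 htpos
        rwa [← mul_assoc, mul_inv_cancel₀ htpos.ne', one_mul] at this
      have h3' : -f x < t * c := by
        have := mul_lt_mul_of_pos_left h3 htpos
        rwa [mul_neg, ← mul_assoc, mul_inv_cancel₀ htpos.ne', one_mul] at this
      have h4 : ‖f x‖ < c * t := by
        rw [Real.norm_eq_abs, abs_lt]
        constructor
        · nlinarith
        · nlinarith
      have h5 : c * t < ‖f x‖ := by
        have : t < ‖f x‖ / c := by
          have : ‖x‖ < ‖f x‖ / c := (lt_div_iff₀ hc0).mpr (by linarith [hcon])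
          rw [ht]; linarith
        calc c * t < c * (‖f x‖ / c) := by exact (mul_lt_mul_iff_right₀ hc0).mpr this
          _ = ‖f x‖ := by field_simp
      linarith
    set g : V →L[ℝ] ℝ := c⁻¹ • f with hg
    have hgapp : ∀ x : V, g x = c⁻¹ * f x := fun x => rfl
    have hfec : f e = c := by
      have h1 : f e ≤ ‖f e‖ := le_abs_self _
      have h2 : ‖f e‖ ≤ ‖f‖ * ‖e‖ := f.le_opNorm e
      rw [he1, mul_one] at h2
      exact le_antisymm (h1.trans (h2.trans hfnorm)) hfe
    have hge : g e = 1 := by rw [hgapp, hfec, inv_mul_cancel₀ hc0.ne']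
    have hgnorm_le : ‖g‖ ≤ 1 := by
      apply ContinuousLinearMap.opNorm_le_bound _ zero_le_one
      intro x
      have h2 : ‖f x‖ ≤ c * ‖x‖ := by
        have h3 := f.le_opNorm x
        nlinarith [mul_le_mul_of_nonneg_right hfnorm (norm_nonneg x)]
      rw [hgapp x, one_mul, Real.norm_eq_abs, abs_mul, abs_of_pos (inv_pos.mpr hc0)]
      rw [Real.norm_eq_abs] at h2
      calc c⁻¹ * |f x| ≤ c⁻¹ * (c * ‖x‖) :=
            mul_le_mul_of_nonneg_left h2 (by positivity)
        _ = ‖x‖ := by field_simp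
    have hgpos : ∀ x ∈ C, 0 ≤ g x := by
      intro x hx
      rcases eq_or_ne x 0 with rfl | hx0
      · simp
      by_contra hneg
      push_neg at hneg
      have hxn : 0 < ‖x‖ := norm_pos_iff.mpr hx0
      set y := ‖x‖⁻¹ • x with hy
      have hyC : y ∈ C := hCsmul x hx _ (by positivity)
      have hyn : ‖y‖ = 1 := by
        rw [hy, norm_smul, Real.norm_eq_abs, abs_of_pos (by positivity),
          inv_mul_cancel₀ hxn.ne']
      have hey : e - y ∈ C := by
        have := (hA y).1
        rwa [hyn, one_smul] at this
      have heyn : ‖e - y‖ ≤ 1 := by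
        apply hB _ 1 one_pos.le
        · rw [one_smul, sub_sub_cancel]; exact hyC
        · rw [one_smul]; exact hCadd e he _ hey
      have h1 : g (e - y) ≤ 1 := by
        have h2 : ‖g (e - y)‖ ≤ ‖g‖ * ‖e - y‖ := g.le_opNorm _
        have h3 : ‖g‖ * ‖e - y‖ ≤ 1 * 1 :=
          mul_le_mul hgnorm_le heyn (norm_nonneg _) (by linarith [norm_nonneg g])
        calc g (e - y) ≤ ‖g (e - y)‖ := le_abs_self _
          _ ≤ 1 := by linarith
      have h4 : g y < 0 := by
        rw [hy, map_smul, smul_eq_mul]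
        exact mul_neg_of_pos_of_neg (by positivity) hneg
      rw [map_sub, hge] at h1
      linarith
    have hgn : ‖g‖ = 1 := by
      refine le_antisymm hgnorm_le ?_
      have h2 := g.le_opNorm e
      rw [he1, mul_one, hge] at h2
      simpa using h2
    refine ⟨g, hgpos, hgn, ?_⟩
    rw [hgapp, hfu, mul_zero]
  · rintro ⟨f, hfpos, hfn, hfu⟩
    have hfe1 : f e = 1 := by
      have h1 : f e ≤ 1 := by
        have h2 := f.le_opNorm e
        rw [hfn, he1, one_mul] at h2
        exact (le_abs_self _).trans h2
      have hfe0 : 0 ≤ f e := hfpos e he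
      have h2 : ‖f‖ ≤ f e := by
        apply ContinuousLinearMap.opNorm_le_bound _ hfe0
        intro x
        have h3 := hfpos _ (hA x).1
        have h4 := hfpos _ (hA x).2
        rw [map_sub, map_smul, smul_eq_mul] at h3
        rw [map_add, map_smul, smul_eq_mul] at h4
        rw [Real.norm_eq_abs, abs_le]
        constructor <;> nlinarith
      rw [hfn] at h2
      linarith
    set M := ‖u‖ with hMdef
    refine ⟨M • e - u, (hA u).1, ?_, ?_⟩
    · intro h
      have := congrArg f h
      rw [map_sub, map_smul, smul_eq_mul, hfe1, hfu, map_zero, mul_one, sub_zero] at this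
      exact hM.ne' this
    · have hMeC : M • e ∈ C := hCsmul e he M hM.le
      have hNv : ‖M • e - u‖ = M := by
        refine le_antisymm (hB _ M hM.le ?_ ?_) ?_
        · rw [sub_sub_cancel]; exact hu
        · exact hCadd _ hMeC _ (hA u).1
        · have h1 : f (M • e - u) = M := by
            rw [map_sub, map_smul, smul_eq_mul, hfe1, hfu, mul_one, sub_zero]
          have h2 : ‖f (M • e - u)‖ ≤ ‖f‖ * ‖M • e - u‖ := f.le_opNorm _
          rw [hfn, one_mul, h1, Real.norm_eq_abs, abs_of_pos hM] at h2
          exact h2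
      intro k
      have hkv : ‖k • (M • e - u)‖ = |k| * M := by
        rw [norm_smul, Real.norm_eq_abs, hNv]
      rw [hkv, show ‖u‖ = M from hMdef.symm]
      set a := max M (|k| * M) with haDef
      have haM : M ≤ a := le_max_left _ _
      have hakM : |k| * M ≤ a := le_max_right _ _
      have ha0 : 0 ≤ a := hM.le.trans haM
      have hnegk : -k ≤ |k| := neg_le_abs k
      have hposk : k ≤ |k| := le_abs_self k
      -- upper bound
      have hupper : ‖u + k • (M • e - u)‖ ≤ a := by
        rcases le_or_gt k 1 with hk1 | hk1
        · apply hB _ a ha0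
          · have hid : a • e - (u + k • (M • e - u))
                = (a - M) • e + (1 - k) • (M • e - u) := by module
            rw [hid]
            exact hCadd _ (hCsmul e he _ (by linarith)) _
              (hCsmul _ (hA u).1 _ (by linarith))
          · have hid : a • e + (u + k • (M • e - u))
                = (a + k * M) • e + (1 - k) • u := by module
            rw [hid]
            exact hCadd _ (hCsmul e he _ (by nlinarith)) _
              (hCsmul u hu _ (by linarith))
        · apply hB _ a ha0
          · have hid : a • e - (u + k • (M • e - u))
                = (a - k * M) • e + (k - 1) • u := by module
            rw [hid]
            refine hCadd _ (hCsmul e he _ ?_) _ (hCsmul u hu _ (by linarith))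
            have : k * M ≤ |k| * M := by nlinarith
            linarith
          · have hid : a • e + (u + k • (M • e - u))
                = (a + M) • e + (k - 1) • (M • e - u) := by module
            rw [hid]
            exact hCadd _ (hCsmul e he _ (by linarith)) _
              (hCsmul _ (hA u).1 _ (by linarith))
      -- lower bound via f : ≥ |k| * M
      have hlow2 : |k| * M ≤ ‖u + k • (M • e - u)‖ := by
        have h1 : f (u + k • (M • e - u)) = k * M := by
          rw [map_add, map_smul, map_sub, map_smul, smul_eq_mul, smul_eq_mul,
            hfe1, hfu, mul_one, sub_zero, zero_add]
        have h2 : ‖f (u + k • (M • e - u))‖ ≤ ‖f‖ * ‖u + k • (M • e - u)‖ :=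
          f.le_opNorm _
        rw [hfn, one_mul, h1, Real.norm_eq_abs, abs_mul, abs_of_pos hM] at h2
        exact h2
      -- lower bound : ≥ M
      have hlow1 : M ≤ ‖u + k • (M • e - u)‖ := by
        rcases le_or_gt 1 k with hk1 | hk1
        · have : M ≤ |k| * M := by nlinarith [abs_of_pos (lt_of_lt_of_le one_pos hk1)]
          linarith
        · by_contra hcon
          push_neg at hcon
          set s := ‖u + k • (M • e - u)‖ with hs
          have h1 : s • e - (u + k • (M • e - u)) ∈ C := (hA _).1
          have h2 : (s - k * M) • e - (1 - k) • u ∈ C := by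
            have hid : (s - k * M) • e - (1 - k) • u
                = s • e - (u + k • (M • e - u)) := by module
            rw [hid]; exact h1
          have h3 : 0 ≤ s - k * M := by
            by_contra hneg
            push_neg at hneg
            have ha' : (k * M - s) • e ∈ C := hCsmul e he _ (by linarith)
            have hb' : (s - k * M) • e ∈ C := by
              have hid : (s - k * M) • e
                  = ((s - k * M) • e - (1 - k) • u) + (1 - k) • u := by module
              rw [hid]; exact hCadd _ h2 _ (hCsmul u hu _ (by linarith))
            have h0 := hCproper _ hb' (by
              rw [show -((s - k * M) • e) = (k * M - s) • e by module]; exact ha')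
            rcases smul_eq_zero.mp h0 with h' | h'
            · linarith
            · exact heq0 h'
          have h1k : 0 < 1 - k := by linarith
          have h4 : ((s - k * M) / (1 - k)) • e - u ∈ C := by
            have hid : ((s - k * M) / (1 - k)) • e - u
                = (1 - k)⁻¹ • ((s - k * M) • e - (1 - k) • u) := by
              match_scalars <;> field_simp
            rw [hid]; exact hCsmul _ h2 _ (by positivity)
          have h5 : ‖u‖ ≤ (s - k * M) / (1 - k) :=
            hB u _ (by positivity) h4
              (hCadd _ (hCsmul e he _ (by positivity)) _ hu)
          rw [← hMdef, le_div_iff₀ h1k] at h5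
          nlinarith
      exact le_antisymm hupper (max_le hlow1 hlow2)
end

section
/- Let (V, e) be an order unit space and u ∈ V⁺ with ‖u‖ = 1, and suppose there is a state f of V with f(u) = 0. If v ∈ V⁺ with ‖v‖ = 1 and u ⊥_∞ v, then v ≤ e − u; moreover u ⊥_∞ (e − u). Hence e − u is the greatest norm-one positive element ∞-orthogonal to u. -/
theorem stmt16 {V : Type*} [NormedAddCommGroup V] [NormedSpace ℝ V] (C : Set V) (e : V)
    -- `C` is a norm-closed, proper, generating cone:
    (hCadd : ∀ x ∈ C, ∀ y ∈ C, x + y ∈ C)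
    (hCsmul : ∀ x ∈ C, ∀ r : ℝ, 0 ≤ r → r • x ∈ C)
    (hCproper : ∀ x, x ∈ C → -x ∈ C → x = 0)
    (hCgen : ∀ x : V, ∃ y ∈ C, ∃ z ∈ C, x = y - z)
    (hCclosed : IsClosed C)
    -- `e` is an Archimedean order unit:
    (he : e ∈ C)
    (hunit : ∀ v : V, ∃ k : ℝ, 0 < k ∧ k • e - v ∈ C ∧ k • e + v ∈ C)
    (harch : ∀ v : V, (∀ k : ℝ, 0 < k → k • e + v ∈ C) → v ∈ C)
    -- the norm is the order unit norm determined by `e`: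
    (hnorm : ∀ v : V, ‖v‖ = sInf {k : ℝ | 0 < k ∧ k • e - v ∈ C ∧ k • e + v ∈ C})
    (u : V) (hu : u ∈ C) (hun : ‖u‖ = 1)
    -- there is a state `f` of `V` with `f u = 0`:
    (f : V →L[ℝ] ℝ) (hfpos : ∀ x ∈ C, 0 ≤ f x) (hf : ‖f‖ = 1) (hfe : f e = 1)
    (hfu : f u = 0) :
    (e - u ∈ C ∧ ‖e - u‖ = 1 ∧ PerpInf u (e - u)) ∧
      ∀ v ∈ C, ‖v‖ = 1 → PerpInf u v → (e - u) - v ∈ C := by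
  -- basic helpers
  have hSne : ∀ x : V, {k : ℝ | 0 < k ∧ k • e - x ∈ C ∧ k • e + x ∈ C}.Nonempty := by
    intro x; obtain ⟨k, h1, h2, h3⟩ := hunit x; exact ⟨k, h1, h2, h3⟩
  have hSbdd : ∀ x : V, BddBelow {k : ℝ | 0 < k ∧ k • e - x ∈ C ∧ k • e + x ∈ C} :=
    fun x => ⟨0, fun m hm => hm.1.le⟩
  have hnle : ∀ (x : V) (m : ℝ), 0 < m → m • e - x ∈ C → m • e + x ∈ C → ‖x‖ ≤ m := by
    intro x m h1 h2 h3; rw [hnorm]; exact csInf_le (hSbdd x) ⟨h1, h2, h3⟩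
  have hge : ∀ (x : V) (M : ℝ),
      (∀ m : ℝ, 0 < m → m • e - x ∈ C → m • e + x ∈ C → M ≤ m) → M ≤ ‖x‖ := by
    intro x M h; rw [hnorm]; exact le_csInf (hSne x) (fun m hm => h m hm.1 hm.2.1 hm.2.2)
  -- if ‖x‖ ≤ 1 then e - x ∈ C and e + x ∈ C
  have hle1 : ∀ x : V, ‖x‖ ≤ 1 → e - x ∈ C ∧ e + x ∈ C := by
    intro x hx
    have key : ∀ t : ℝ, 0 < t → ((1 + t) • e - x ∈ C ∧ (1 + t) • e + x ∈ C) := by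
      intro t ht
      have h1 : sInf {k : ℝ | 0 < k ∧ k • e - x ∈ C ∧ k • e + x ∈ C} < 1 + t := by
        rw [← hnorm]; linarith
      obtain ⟨m, hm, hmt⟩ := exists_lt_of_csInf_lt (hSne x) h1
      constructor
      · have h2 := hCadd _ (hCsmul e he (1 + t - m) (by linarith)) _ hm.2.1
        have heq : (1 + t - m) • e + (m • e - x) = (1 + t) • e - x := by module
        rwa [heq] at h2
      · have h2 := hCadd _ (hCsmul e he (1 + t - m) (by linarith)) _ hm.2.2
        have heq : (1 + t - m) • e + (m • e + x) = (1 + t) • e + x := by module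
        rwa [heq] at h2
    constructor
    · apply harch; intro k hk
      have h2 := (key k hk).1
      have heq : (1 + k) • e - x = k • e + (e - x) := by module
      rwa [heq] at h2
    · apply harch; intro k hk
      have h2 := (key k hk).2
      have heq : (1 + k) • e + x = k • e + (e + x) := by module
      rwa [heq] at h2
  have heu : e - u ∈ C := (hle1 u hun.le).1
  have hfbound : ∀ x : V, |f x| ≤ ‖x‖ := by
    intro x
    have h1 := f.le_opNorm x
    rwa [hf, one_mul, Real.norm_eq_abs] at h1
  have hfeu : f (e - u) = 1 := by rw [map_sub, hfe, hfu]; ring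
  have heun : ‖e - u‖ = 1 := by
    refine le_antisymm (hnle _ 1 one_pos ?_ ?_) ?_
    · have heq : (1 : ℝ) • e - (e - u) = u := by module
      rw [heq]; exact hu
    · have heq : (1 : ℝ) • e + (e - u) = e + (e - u) := by module
      rw [heq]; exact hCadd _ he _ heu
    · have h1 := hfbound (e - u)
      rw [hfeu] at h1; simpa using h1
  have hperp : PerpInf u (e - u) := by
    intro k
    rw [hun, norm_smul, heun, Real.norm_eq_abs, mul_one]
    have hM1 : (1 : ℝ) ≤ max 1 |k| := le_max_left _ _
    have hMk : |k| ≤ max 1 |k| := le_max_right _ _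
    refine le_antisymm (hnle _ (max 1 |k|) (by linarith) ?_ ?_) ?_
    · -- max • e - (u + k • (e-u)) ∈ C
      rcases le_total 0 k with hk | hk
      · rw [abs_of_nonneg hk] at hMk ⊢
        rcases le_total k 1 with hk1 | hk1
        · have hMeq : max 1 k = 1 := max_eq_left hk1
          rw [hMeq]
          have heq : (1 : ℝ) • e - (u + k • (e - u)) = (1 - k) • (e - u) := by module
          rw [heq]; exact hCsmul _ heu _ (by linarith)
        · have hMeq : max 1 k = k := max_eq_right hk1
          rw [hMeq]
          have heq : k • e - (u + k • (e - u)) = (k - 1) • u := by module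
          rw [heq]; exact hCsmul _ hu _ (by linarith)
      · rw [abs_of_nonpos hk] at hMk ⊢
        have heq : (max 1 (-k)) • e - (u + k • (e - u))
            = (max 1 (-k) - 1) • e + (1 + -k) • (e - u) := by module
        rw [heq]
        have h1k := le_max_left (1:ℝ) (-k)
        exact hCadd _ (hCsmul e he _ (by linarith)) _ (hCsmul _ heu _ (by linarith))
    · -- max • e + (u + k • (e-u)) ∈ C
      rcases le_total 0 k with hk | hk
      · rw [abs_of_nonneg hk]
        have heq : (max 1 k) • e + (u + k • (e - u))
            = ((max 1 k) • e + u) + k • (e - u) := by module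
        rw [heq]
        have h1k := le_max_left (1:ℝ) k
        exact hCadd _ (hCadd _ (hCsmul e he _ (by linarith)) _ hu) _ (hCsmul _ heu _ hk)
      · rw [abs_of_nonpos hk] at hMk ⊢
        have heq : (max 1 (-k)) • e + (u + k • (e - u))
            = (max 1 (-k) - -k) • e + (1 + -k) • u := by module
        rw [heq]
        exact hCadd _ (hCsmul e he _ (by linarith)) _ (hCsmul _ hu _ (by linarith))
    · -- lower bound
      refine hge _ _ (fun m hm hm1 hm2 => ?_)
      have hfx : f (u + k • (e - u)) = k := by
        rw [map_add, map_smul, hfeu, hfu, smul_eq_mul]; ring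
      have habs : |k| ≤ m := by
        have h1 := hfpos _ hm1
        have h2 := hfpos _ hm2
        rw [map_sub, map_smul, hfx, hfe, smul_eq_mul, mul_one] at h1
        rw [map_add, map_smul, hfx, hfe, smul_eq_mul, mul_one] at h2
        rw [abs_le]; constructor <;> linarith
      have h1m : (1 : ℝ) ≤ m := by
        rcases le_total 0 k with hk | hk
        · -- m • e - u ∈ C, so m ≥ ‖u‖ = 1
          have h3 := hCadd _ hm1 _ (hCsmul _ heu k hk)
          have heq : (m • e - (u + k • (e - u))) + k • (e - u) = m • e - u := by module
          rw [heq] at h3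
          have h4 : ‖u‖ ≤ m := hnle u m hm h3 (hCadd _ (hCsmul e he m hm.le) _ hu)
          rwa [hun] at h4
        · have hkm : -k ≤ m := by rw [abs_of_nonpos hk] at habs; exact habs
          have heq : m • e - (u + k • (e - u)) = (m + -k) • e - (1 + -k) • u := by module
          rw [heq] at hm1
          have hm2' : (m + -k) • e + (1 + -k) • u ∈ C :=
            hCadd _ (hCsmul e he _ (by linarith)) _ (hCsmul _ hu _ (by linarith))
          have h4 : ‖(1 + -k) • u‖ ≤ m + -k := hnle _ _ (by linarith) hm1 hm2'
          rw [norm_smul, hun, mul_one, Real.norm_eq_abs, abs_of_nonneg (by linarith : (0:ℝ) ≤ 1 + -k)] at h4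
          linarith
      exact max_le h1m habs
  refine ⟨⟨heu, heun, hperp⟩, ?_⟩
  intro v hv hvn hpv
  have h1 := hpv 1
  rw [one_smul, hun, hvn, max_self] at h1
  have h2 := (hle1 (u + v) h1.le).1
  have heq : (e - u) - v = e - (u + v) := by abel
  rw [heq]; exact h2
end

section
/- Let V be an order smooth 1-normed space, u₁, u₂ ∈ V⁺ \ {0}, and f_i ∈ V'⁺ with ‖f_i‖ = 1, f_i(u_i) = ‖u_i‖ (i = 1,2). Let g_i be the restrictions of f_i to the span W of {u₁, u₂}. Then [u₁ ⊥_1 u₂ and g₁(u₂) = 0 = g₂(u₁)] holds if and only if g₁ ⊥_∞ g₂ in W'. -/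
set_option synthInstance.maxHeartbeats 1000000
set_option maxHeartbeats 1000000


lemma perpOne_norm_combo {X : Type*} [NormedAddCommGroup X] [NormedSpace ℝ X] {x y : X}
    (h : PerpOne x y) (a b : ℝ) : ‖a • x + b • y‖ = |a| * ‖x‖ + |b| * ‖y‖ := by
  rcases eq_or_ne a 0 with rfl | ha
  · simp [norm_smul, Real.norm_eq_abs]
  · have h1 : a • x + b • y = a • (x + (b / a) • y) := by
      rw [smul_add, smul_smul]; field_simp
    rw [h1, norm_smul, h (b / a), norm_smul, Real.norm_eq_abs, Real.norm_eq_abs, abs_div,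
      mul_add]
    congr 1
    have : |a| ≠ 0 := by simpa using ha
    field_simp

theorem stmt17 {V : Type*} [NormedAddCommGroup V] [NormedSpace ℝ V] (C : Set V)
    -- `C` is a norm-closed, proper, generating cone:
    (hCadd : ∀ x ∈ C, ∀ y ∈ C, x + y ∈ C)
    (hCsmul : ∀ x ∈ C, ∀ r : ℝ, 0 ≤ r → r • x ∈ C)
    (hCproper : ∀ x, x ∈ C → -x ∈ C → x = 0)
    (hCgen : ∀ x : V, ∃ y ∈ C, ∃ z ∈ C, x = y - z)
    (hCclosed : IsClosed C)
    -- (O.1.1):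
    (hO1 : ∀ u v w : V, v - u ∈ C → w - v ∈ C → ‖v‖ ≤ ‖u‖ + ‖w‖)
    -- (O.1.2):
    (hO2 : ∀ v : V, ∀ ε : ℝ, 0 < ε → ∃ u₁ ∈ C, ∃ u₂ ∈ C,
      v = u₁ - u₂ ∧ ‖u₁‖ + ‖u₂‖ ≤ ‖v‖ + ε)
    (u₁ u₂ : V) (hu₁ : u₁ ∈ C) (hu₂ : u₂ ∈ C) (hn₁ : u₁ ≠ 0) (hn₂ : u₂ ≠ 0)
    (f₁ f₂ : V →L[ℝ] ℝ)
    (hf₁pos : ∀ x ∈ C, 0 ≤ f₁ x) (hf₂pos : ∀ x ∈ C, 0 ≤ f₂ x)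
    (hf₁ : ‖f₁‖ = 1) (hf₂ : ‖f₂‖ = 1)
    (hs₁ : f₁ u₁ = ‖u₁‖) (hs₂ : f₂ u₂ = ‖u₂‖)
    -- `W` is the span of `u₁, u₂` and `gᵢ = fᵢ|_W`:
    (W : Submodule ℝ V) (hW : W = Submodule.span ℝ {u₁, u₂})
    (g₁ g₂ : W →L[ℝ] ℝ) (hg₁ : g₁ = f₁.comp W.subtypeL) (hg₂ : g₂ = f₂.comp W.subtypeL) :
    (PerpOne u₁ u₂ ∧ f₁ u₂ = 0 ∧ f₂ u₁ = 0) ↔ PerpInf g₁ g₂ := by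
  have hp₁ : (0:ℝ) < ‖u₁‖ := norm_pos_iff.2 hn₁
  have hp₂ : (0:ℝ) < ‖u₂‖ := norm_pos_iff.2 hn₂
  have hm₁ : u₁ ∈ W := by rw [hW]; exact Submodule.subset_span (Set.mem_insert _ _)
  have hm₂ : u₂ ∈ W := by
    rw [hW]; exact Submodule.subset_span (Set.mem_insert_of_mem _ rfl)
  set w₁ : W := ⟨u₁, hm₁⟩ with hw₁def
  set w₂ : W := ⟨u₂, hm₂⟩ with hw₂def
  have hcw₁ : ‖w₁‖ = ‖u₁‖ := rfl
  have hcw₂ : ‖w₂‖ = ‖u₂‖ := rfl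
  have hev₁ : ∀ x : W, g₁ x = f₁ (x : V) := by intro x; rw [hg₁]; rfl
  have hev₂ : ∀ x : W, g₂ x = f₂ (x : V) := by intro x; rw [hg₂]; rfl
  -- norms of g₁, g₂
  have hng : ∀ (f : V →L[ℝ] ℝ) (g : W →L[ℝ] ℝ), ‖f‖ = 1 → (∀ x : W, g x = f (x : V)) →
      (∃ u : W, u ≠ 0 ∧ g u = ‖u‖) → ‖g‖ = 1 := by
    intro f g hf hev ⟨u, hu, hgu⟩
    apply le_antisymm
    · apply ContinuousLinearMap.opNorm_le_bound _ zero_le_one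
      intro x
      calc ‖g x‖ = ‖f (x : V)‖ := by rw [hev]
        _ ≤ ‖f‖ * ‖(x : V)‖ := f.le_opNorm _
        _ = 1 * ‖x‖ := by rw [hf]; rfl
    · have h1 := g.le_opNorm u
      rw [hgu, Real.norm_eq_abs, abs_of_nonneg (norm_nonneg _)] at h1
      have hu' : (0:ℝ) < ‖u‖ := norm_pos_iff.2 hu
      exact le_of_mul_le_mul_right (by linarith) hu'
  have hsm : ∀ (c : ℝ) (g : W →L[ℝ] ℝ), ‖c • g‖ = |c| * ‖g‖ := by
    intro c g
    rcases eq_or_ne c 0 with rfl | hc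
    · rw [zero_smul, abs_zero, zero_mul]; exact ContinuousLinearMap.opNorm_zero
    · apply le_antisymm
      · simpa [Real.norm_eq_abs] using ContinuousLinearMap.opNorm_smul_le c g
      · have h := ContinuousLinearMap.opNorm_smul_le c⁻¹ (c • g)
        rw [inv_smul_smul₀ hc, Real.norm_eq_abs, abs_inv] at h
        have hc' : (0:ℝ) < |c| := abs_pos.2 hc
        calc |c| * ‖g‖ ≤ |c| * (|c|⁻¹ * ‖c • g‖) := by gcongr
          _ = ‖c • g‖ := by field_simp
  have hng₁ : ‖g₁‖ = 1 := by
    refine hng f₁ g₁ hf₁ hev₁ ⟨w₁, ?_, ?_⟩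
    · simp [hw₁def, Submodule.mk_eq_zero, hn₁]
    · rw [hev₁]; exact hs₁.trans hcw₁.symm
  have hng₂ : ‖g₂‖ = 1 := by
    refine hng f₂ g₂ hf₂ hev₂ ⟨w₂, ?_, ?_⟩
    · simp [hw₂def, Submodule.mk_eq_zero, hn₂]
    · rw [hev₂]; exact hs₂.trans hcw₂.symm
  constructor
  · rintro ⟨hperp, h12, h21⟩ k
    rw [hng₁, hsm k g₂, hng₂, mul_one]
    have hmax : (0:ℝ) ≤ max 1 |k| := le_trans zero_le_one (le_max_left _ _)
    apply le_antisymm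
    · apply ContinuousLinearMap.opNorm_le_bound _ hmax
      intro x
      have hx2 : (x : V) ∈ Submodule.span ℝ ({u₁, u₂} : Set V) := by
        rw [← hW]; exact x.2
      obtain ⟨a, b, hab⟩ := (Submodule.mem_span_pair).1 hx2
      have hx : (x : V) = a • u₁ + b • u₂ := hab.symm
      have hgx : (g₁ + k • g₂) x = a * ‖u₁‖ + k * (b * ‖u₂‖) := by
        simp only [ContinuousLinearMap.add_apply, ContinuousLinearMap.smul_apply,
          hev₁, hev₂, hx, map_add, map_smul, smul_eq_mul, h12, h21, hs₁, hs₂]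
        ring
      have hnx : ‖x‖ = |a| * ‖u₁‖ + |b| * ‖u₂‖ := by
        have : ‖x‖ = ‖(x : V)‖ := rfl
        rw [this, hx, perpOne_norm_combo hperp]
      rw [hgx, hnx, Real.norm_eq_abs]
      calc |a * ‖u₁‖ + k * (b * ‖u₂‖)| ≤ |a * ‖u₁‖| + |k * (b * ‖u₂‖)| := abs_add_le _ _
        _ = |a| * ‖u₁‖ + |k| * (|b| * ‖u₂‖) := by
            rw [abs_mul, abs_mul, abs_mul, abs_of_nonneg (norm_nonneg u₁),
              abs_of_nonneg (norm_nonneg u₂)]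
        _ ≤ max 1 |k| * (|a| * ‖u₁‖) + max 1 |k| * (|b| * ‖u₂‖) := by
            have t1 : |a| * ‖u₁‖ ≤ max 1 |k| * (|a| * ‖u₁‖) :=
              le_mul_of_one_le_left (by positivity) (le_max_left _ _)
            have t2 : |k| * (|b| * ‖u₂‖) ≤ max 1 |k| * (|b| * ‖u₂‖) :=
              mul_le_mul_of_nonneg_right (le_max_right _ _) (by positivity)
            linarith
        _ = max 1 |k| * (|a| * ‖u₁‖ + |b| * ‖u₂‖) := by ring
    · apply max_le
      · have h1 := (g₁ + k • g₂).le_opNorm w₁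
        have hval : (g₁ + k • g₂) w₁ = ‖u₁‖ := by
          simp [ContinuousLinearMap.add_apply, ContinuousLinearMap.smul_apply,
            show (w₁ : V) = u₁ from rfl, show (w₂ : V) = u₂ from rfl, hev₁, hev₂, hs₁, h21]
        rw [hval, hcw₁, Real.norm_eq_abs, abs_of_nonneg (norm_nonneg _)] at h1
        exact le_of_mul_le_mul_right (by linarith) hp₁
      · have h1 := (g₁ + k • g₂).le_opNorm w₂
        have hval : (g₁ + k • g₂) w₂ = k * ‖u₂‖ := by
          simp [ContinuousLinearMap.add_apply, ContinuousLinearMap.smul_apply,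
            show (w₁ : V) = u₁ from rfl, show (w₂ : V) = u₂ from rfl, hev₁, hev₂, hs₂, h12]
        rw [hval, hcw₂, Real.norm_eq_abs, abs_mul, abs_of_nonneg (norm_nonneg _)] at h1
        exact le_of_mul_le_mul_right h1 hp₂
    
  · intro hinf
    have hsum : ‖g₁ + g₂‖ = 1 := by
      have := hinf 1
      rw [one_smul, hng₁, hng₂] at this
      simpa using this
    have h21 : f₂ u₁ = 0 := by
      have h1 := (g₁ + g₂).le_opNorm w₁
      have hval : (g₁ + g₂) w₁ = ‖u₁‖ + f₂ u₁ := by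
        simp [ContinuousLinearMap.add_apply, show (w₁ : V) = u₁ from rfl, show (w₂ : V) = u₂ from rfl, hev₁, hev₂, hs₁]
      rw [hval, hsum, one_mul, hcw₁, Real.norm_eq_abs] at h1
      have hpos : 0 ≤ f₂ u₁ := hf₂pos u₁ hu₁
      have := le_trans (le_abs_self _) h1
      linarith
    have h12 : f₁ u₂ = 0 := by
      have h1 := (g₁ + g₂).le_opNorm w₂
      have hval : (g₁ + g₂) w₂ = f₁ u₂ + ‖u₂‖ := by
        simp [ContinuousLinearMap.add_apply, show (w₁ : V) = u₁ from rfl, show (w₂ : V) = u₂ from rfl, hev₁, hev₂, hs₂]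
      rw [hval, hsum, one_mul, hcw₂, Real.norm_eq_abs] at h1
      have hpos : 0 ≤ f₁ u₂ := hf₁pos u₂ hu₂
      have := le_trans (le_abs_self _) h1
      linarith
    refine ⟨?_, h12, h21⟩
    intro k
    apply le_antisymm
    · exact norm_add_le _ _
    · set s : ℝ := if 0 ≤ k then 1 else -1 with hs
      have hsk : s * k = |k| := by
        rcases le_or_gt 0 k with h | h
        · simp [hs, h, abs_of_nonneg h]
        · simp [hs, not_le.2 h, abs_of_neg h]
      have hnh : ‖g₁ + s • g₂‖ = 1 := by
        have := hinf s
        rw [hng₁, hsm s g₂, hng₂, mul_one] at this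
        have habs : |s| = 1 := by rcases le_or_gt 0 k with h | h <;> simp [hs, h, not_le.2]
        rw [this, habs, max_self]
      have h1 := (g₁ + s • g₂).le_opNorm (w₁ + k • w₂)
      have hval : (g₁ + s • g₂) (w₁ + k • w₂) = ‖u₁‖ + |k| * ‖u₂‖ := by
        have hco : ((w₁ + k • w₂ : W) : V) = u₁ + k • u₂ := rfl
        simp only [ContinuousLinearMap.add_apply, ContinuousLinearMap.smul_apply,
          show (w₁ : V) = u₁ from rfl, show (w₂ : V) = u₂ from rfl, hev₁, hev₂, hco, map_add, map_smul, smul_eq_mul, hs₁, hs₂, h12, h21]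
        rw [← hsk]; ring
      have hcw : ‖w₁ + k • w₂‖ = ‖u₁ + k • u₂‖ := rfl
      rw [hval, hnh, one_mul, hcw, Real.norm_eq_abs] at h1
      rw [norm_smul, Real.norm_eq_abs]
      exact le_trans (le_abs_self _) h1
end

section
/- Let (V, B) be a base normed space and u₁, u₂ ∈ V⁺ \ {0}. Suppose f_i ∈ V'⁺ with ‖f_i‖ = 1 and f_i(u_i) = ‖u_i‖ for i = 1,2, and f₁(u₂) = 0 = f₂(u₁). Then u₁ ⊥_1 u₂, i.e., ‖u₁ + k·u₂‖ = ‖u₁‖ + ‖k·u₂‖ for all k ∈ ℝ. -/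
open scoped Pointwise
theorem stmt18 {V : Type*} [NormedAddCommGroup V] [NormedSpace ℝ V] (C : Set V) (B : Set V)
    -- `C` is a norm-closed, proper, generating cone:
    (hCadd : ∀ x ∈ C, ∀ y ∈ C, x + y ∈ C)
    (hCsmul : ∀ x ∈ C, ∀ r : ℝ, 0 ≤ r → r • x ∈ C)
    (hCproper : ∀ x, x ∈ C → -x ∈ C → x = 0)
    (hCgen : ∀ x : V, ∃ y ∈ C, ∃ z ∈ C, x = y - z)
    (hCclosed : IsClosed C)
    -- `B` is a base for `C`:
    (hBC : B ⊆ C) (hBconv : Convex ℝ B) (hB0 : (0 : V) ∉ B)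
    (hbase : ∀ u ∈ C, u ≠ 0 → ∃! kb : ℝ × V, 0 < kb.1 ∧ kb.2 ∈ B ∧ u = kb.1 • kb.2)
    -- the norm is the base norm, the Minkowski gauge of `conv (B ∪ -B)`:
    (hnorm : ∀ v : V,
      ‖v‖ = sInf {r : ℝ | 0 < r ∧ v ∈ r • (convexHull ℝ (B ∪ -B))})
    (u₁ u₂ : V) (hu₁ : u₁ ∈ C) (hu₂ : u₂ ∈ C) (hn₁ : u₁ ≠ 0) (hn₂ : u₂ ≠ 0)
    (f₁ f₂ : V →L[ℝ] ℝ)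
    (hf₁pos : ∀ x ∈ C, 0 ≤ f₁ x) (hf₂pos : ∀ x ∈ C, 0 ≤ f₂ x)
    (hf₁ : ‖f₁‖ = 1) (hf₂ : ‖f₂‖ = 1)
    (hs₁ : f₁ u₁ = ‖u₁‖) (hs₂ : f₂ u₂ = ‖u₂‖)
    (h₁₂ : f₁ u₂ = 0) (h₂₁ : f₂ u₁ = 0) :
    PerpOne u₁ u₂ := by
  -- decompositions of u₁, u₂
  obtain ⟨⟨a₁, b₁⟩, ⟨ha₁, hb₁, hrep₁⟩, -⟩ := hbase u₁ hu₁ hn₁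
  obtain ⟨⟨a₂, b₂⟩, ⟨ha₂, hb₂, hrep₂⟩, -⟩ := hbase u₂ hu₂ hn₂
  simp only at ha₁ hb₁ hrep₁ ha₂ hb₂ hrep₂
  have hBne : B.Nonempty := ⟨b₁, hb₁⟩
  -- elements of B are nonzero
  have hBnz : ∀ b ∈ B, b ≠ 0 := fun b hb h => hB0 (h ▸ hb)
  -- description of the convex hull of B ∪ -B
  have hullmem : ∀ x ∈ convexHull ℝ (B ∪ -B), ∃ c₁ ∈ B, ∃ c₂ ∈ B, ∃ t s : ℝ,
      0 ≤ t ∧ 0 ≤ s ∧ t + s = 1 ∧ x = t • c₁ - s • c₂ := by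
    intro x hx
    rw [hBconv.convexHull_union hBconv.neg hBne hBne.neg, mem_convexJoin] at hx
    obtain ⟨c₁, hc₁, c₂', hc₂', t, s, ht, hs, hts, rfl⟩ := hx
    exact ⟨c₁, hc₁, -c₂', Set.mem_neg.mp hc₂', t, s, ht, hs, hts, by module⟩
  -- positive combinations of elements of B
  have combo : ∀ k₁ k₂ : ℝ, 0 < k₁ → 0 ≤ k₂ → ∀ c₁ ∈ B, ∀ c₂ ∈ B,
      ∃ b ∈ B, k₁ • c₁ + k₂ • c₂ = (k₁ + k₂) • b := by
    intro k₁ k₂ hk₁ hk₂ c₁ hc₁ c₂ hc₂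
    rcases eq_or_lt_of_le hk₂ with h | h
    · exact ⟨c₁, hc₁, by rw [← h]; module⟩
    · have hsum : 0 < k₁ + k₂ := by linarith
      refine ⟨(k₁ / (k₁ + k₂)) • c₁ + (k₂ / (k₁ + k₂)) • c₂,
        hBconv hc₁ hc₂ (by positivity) (by positivity) (by field_simp), ?_⟩
      rw [smul_add, smul_smul, smul_smul]
      field_simp
  -- uniqueness of the coefficient
  have uniq : ∀ l₁ l₂ : ℝ, 0 < l₁ → 0 < l₂ → ∀ c₁ ∈ B, ∀ c₂ ∈ B,
      l₁ • c₁ = l₂ • c₂ → l₁ = l₂ := by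
    intro l₁ l₂ hl₁ hl₂ c₁ hc₁ c₂ hc₂ h
    have hmem : l₁ • c₁ ∈ C := hCsmul c₁ (hBC hc₁) l₁ hl₁.le
    have hne : l₁ • c₁ ≠ 0 := smul_ne_zero hl₁.ne' (hBnz c₁ hc₁)
    obtain ⟨kb, -, hu⟩ := hbase (l₁ • c₁) hmem hne
    have e₁ := congrArg Prod.fst (hu (l₁, c₁) ⟨hl₁, hc₁, rfl⟩)
    have e₂ := congrArg Prod.fst (hu (l₂, c₂) ⟨hl₂, hc₂, h⟩)
    simp only at e₁ e₂
    rw [e₁, e₂]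
  -- every element of B has norm one
  have normB : ∀ b ∈ B, ‖b‖ = 1 := by
    intro b hb
    rw [hnorm b]
    have h1 : (1 : ℝ) ∈ {r : ℝ | 0 < r ∧ b ∈ r • (convexHull ℝ (B ∪ -B))} :=
      ⟨one_pos, ⟨b, subset_convexHull ℝ _ (Set.mem_union_left _ hb), one_smul ℝ b⟩⟩
    have hlb : ∀ r ∈ {r : ℝ | 0 < r ∧ b ∈ r • (convexHull ℝ (B ∪ -B))}, (1 : ℝ) ≤ r := by
      rintro r ⟨hr, x, hx, hbx⟩
      obtain ⟨c₁, hc₁, c₂, hc₂, t, s, ht, hs, hts, rfl⟩ := hullmem x hx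
      have key : b + (r * s) • c₂ = (r * t) • c₁ := by
        rw [← hbx]; module
      obtain ⟨b', hb', hb'eq⟩ := combo 1 (r * s) one_pos (by positivity) b hb c₂ hc₂
      rw [one_smul] at hb'eq
      have hL : (1 + r * s) • b' = (r * t) • c₁ := by rw [← hb'eq, key]
      have hpos : (0 : ℝ) < 1 + r * s := by positivity
      have hLC : (1 + r * s) • b' ∈ C := hCsmul b' (hBC hb') _ hpos.le
      have hLne : (1 + r * s) • b' ≠ 0 := smul_ne_zero hpos.ne' (hBnz b' hb')
      have hrt : 0 < r * t := by
        by_contra hc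
        push_neg at hc
        have : -((1 + r * s) • b') ∈ C := by
          rw [hL, ← neg_smul]
          exact hCsmul c₁ (hBC hc₁) _ (by linarith)
        exact hLne (hCproper _ hLC this)
      have := uniq (1 + r * s) (r * t) hpos hrt b' hb' c₁ hc₁ hL
      nlinarith
    exact le_antisymm (csInf_le ⟨1, hlb⟩ h1) (le_csInf ⟨1, h1⟩ hlb)
  -- norm on the cone
  have normCone : ∀ a : ℝ, 0 ≤ a → ∀ b ∈ B, ‖a • b‖ = a := by
    intro a ha b hb
    rw [norm_smul, normB b hb, Real.norm_eq_abs, abs_of_nonneg ha, mul_one]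
  have hnu₁ : ‖u₁‖ = a₁ := by rw [hrep₁]; exact normCone a₁ ha₁.le b₁ hb₁
  have hnu₂ : ‖u₂‖ = a₂ := by rw [hrep₂]; exact normCone a₂ ha₂.le b₂ hb₂
  -- bound for f₁ - f₂
  have gbound : ∀ v : V, f₁ v - f₂ v ≤ ‖v‖ := by
    intro v
    rcases eq_or_ne v 0 with rfl | hv
    · simp
    rcases Set.eq_empty_or_nonempty
        {r : ℝ | 0 < r ∧ v ∈ r • (convexHull ℝ (B ∪ -B))} with he | hne
    · exfalso
      apply hv
      rw [← norm_eq_zero, hnorm v, he, Real.sInf_empty]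
    rw [hnorm v]
    apply le_csInf hne
    rintro r ⟨hr, x, hx, hvx⟩
    obtain ⟨c₁, hc₁, c₂, hc₂, t, s, ht, hs, hts, rfl⟩ := hullmem x hx
    have fb : ∀ (f : V →L[ℝ] ℝ), ‖f‖ = 1 → ∀ c ∈ B, f c ≤ 1 := by
      intro f hf c hc
      calc f c ≤ ‖f c‖ := le_abs_self _
        _ ≤ ‖f‖ * ‖c‖ := f.le_opNorm c
        _ = 1 := by rw [hf, normB c hc, mul_one]
    have e₁ : f₁ c₁ ≤ 1 := fb f₁ hf₁ c₁ hc₁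
    have e₂ : f₂ c₂ ≤ 1 := fb f₂ hf₂ c₂ hc₂
    have p₁ : 0 ≤ f₂ c₁ := hf₂pos c₁ (hBC hc₁)
    have p₂ : 0 ≤ f₁ c₂ := hf₁pos c₂ (hBC hc₂)
    have hv' : f₁ v - f₂ v = r * (t * (f₁ c₁ - f₂ c₁) + s * (f₂ c₂ - f₁ c₂)) := by
      rw [← hvx]
      simp [map_smul, map_sub, smul_eq_mul]
      ring
    rw [hv']
    have hA : t * (f₁ c₁ - f₂ c₁) + s * (f₂ c₂ - f₁ c₂) ≤ 1 := by nlinarith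
    nlinarith [mul_le_mul_of_nonneg_left hA hr.le]
  intro k
  rcases le_or_gt 0 k with hk | hk
  · -- k ≥ 0 : additivity on the cone
    obtain ⟨b, hb, hbeq⟩ := combo a₁ (k * a₂) ha₁ (by positivity) b₁ hb₁ b₂ hb₂
    have hdec : u₁ + k • u₂ = (a₁ + k * a₂) • b := by
      rw [hrep₁, hrep₂, smul_smul, hbeq]
    rw [hdec, normCone _ (by positivity) b hb, hnu₁, hrep₂, smul_smul,
      normCone _ (by positivity) b₂ hb₂]
  · -- k < 0 : use f₁ - f₂
    have hle : ‖u₁ + k • u₂‖ ≤ ‖u₁‖ + ‖k • u₂‖ := norm_add_le _ _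
    have hks : ‖k • u₂‖ = -k * ‖u₂‖ := by
      rw [norm_smul, Real.norm_eq_abs, abs_of_neg hk]
    have := gbound (u₁ + k • u₂)
    have hval : f₁ (u₁ + k • u₂) - f₂ (u₁ + k • u₂) = ‖u₁‖ - k * ‖u₂‖ := by
      simp only [map_add, map_smul, smul_eq_mul, hs₁, hs₂, h₁₂, h₂₁]
      ring
    rw [hval] at this
    rw [hks]
    linarith
end
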